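/- arXiv:1707.07724 — 7 statements merged into one kernel-verified Lean document; each statement's English description precedes it below -/
import Mathlib

section
/- Let p be a real polynomial of degree n and let a < b be real numbers. If both p(t)+a and p(t)+b have all real roots, then for every c in the open interval (a,b), the polynomial p(t)+c has n real and distinct roots. -/
open Polynomial

open scoped Classical in
/-- Core combinatorial induction: walking along a sorted list of points, each of which is a
root of `p + C a` or of `p + C b`, we find between consecutive points either a root of
`p + C c` (sign change) or a root of `derivative p` (Rolle), all new and distinct. -/
lemma stmt0_core (p : Polynomial ℝ) (a b c : ℝ) (hab : a ≠ b) (hac : a < c) (hcb : c < b)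
    (Z : Finset ℝ)
    (hZ : ∀ z ∈ Z, eval z (p + C a) = 0 ∨ eval z (p + C b) = 0) :
    ∀ l : List ℝ, l.Pairwise (· < ·) → (∀ z ∈ l, z ∈ Z) →
      (∀ z ∈ Z, z ∈ l ∨ ∀ h, l.head? = some h → z < h) →
      ∃ rts rol : Finset ℝ,
        rts.card + rol.card = l.length - 1 ∧
        (∀ r ∈ rts, eval r (p + C c) = 0) ∧
        (∀ r ∈ rol, eval r (derivative p) = 0) ∧
        (∀ r ∈ rts, ∀ h, l.head? = some h → h < r) ∧
        (∀ r ∈ rol, ∀ h, l.head? = some h → h < r) ∧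
        (∀ r ∈ rts, r ∉ Z) ∧ (∀ r ∈ rol, r ∉ Z) := by
  intro l
  induction l with
  | nil =>
    exact fun _ _ _ => ⟨∅, ∅, by simp, by simp, by simp, by simp, by simp, by simp, by simp⟩
  | cons u t ih =>
    intro hsort hmem hcomp
    cases t with
    | nil =>
      exact ⟨∅, ∅, by simp, by simp, by simp, by simp, by simp, by simp, by simp⟩
    | cons v t' =>
      obtain ⟨hu, hsort'⟩ := List.pairwise_cons.mp hsort
      have huv : u < v := hu v (by simp)
      have hmem' : ∀ z ∈ v :: t', z ∈ Z := fun z hz => hmem z (by simp [hz])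
      have hcomp' : ∀ z ∈ Z, z ∈ v :: t' ∨ ∀ h, (v :: t').head? = some h → z < h := by
        intro z hz
        rcases hcomp z hz with hzl | hzlt
        · rcases List.mem_cons.mp hzl with heq | hzl
          · subst heq
            right; intro h hh
            simp only [List.head?_cons, Option.some.injEq] at hh
            subst hh
            exact huv
          · exact Or.inl hzl
        · right; intro h hh
          simp only [List.head?_cons, Option.some.injEq] at hh
          subst hh
          exact lt_trans (hzlt u rfl) huv
      obtain ⟨rts', rol', hcard, hrts0, hrol0, hrtsgt, hrolgt, hrtsZ, hrolZ⟩ :=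
        ih hsort' hmem' hcomp'
      have huZ : u ∈ Z := hmem u (by simp)
      have hvZ : v ∈ Z := hmem v (by simp)
      -- no element of Z lies strictly between u and v
      have hgap : ∀ z ∈ Z, ¬(u < z ∧ z < v) := by
        rintro z hz ⟨h1, h2⟩
        rcases hcomp z hz with hzl | hzlt
        · rcases List.mem_cons.mp hzl with heq | hzl
          · exact lt_irrefl _ (heq ▸ h1)
          · rcases List.mem_cons.mp hzl with heq | hzl
            · exact lt_irrefl _ (heq ▸ h2)
            · exact absurd ((List.pairwise_cons.mp hsort').1 z hzl) (not_lt.mpr h2.le)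
        · exact absurd (hzlt u rfl) (not_lt.mpr h1.le)
      -- helper : continuity
      have hcont : ∀ q : Polynomial ℝ, ContinuousOn (fun x => eval x q) (Set.Icc u v) :=
        fun q => (q.continuous).continuousOn
      have hAB : ¬(eval u (p + C a) = 0 ∧ eval u (p + C b) = 0) ∧
          ¬(eval v (p + C a) = 0 ∧ eval v (p + C b) = 0) := by
        constructor <;>
        · rintro ⟨h1, h2⟩
          simp only [eval_add, eval_C] at h1 h2
          exact hab (by linarith)
      -- case analysis on labels of u and v
      by_cases hua : eval u (p + C a) = 0 <;> by_cases hva : eval v (p + C a) = 0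
      · -- both roots of p + C a : Rolle
        obtain ⟨ξ, hξmem, hξ⟩ := exists_hasDerivAt_eq_zero (f' := fun x => eval x (derivative (p + C a)))
          huv (hcont (p + C a)) (hua.trans hva.symm)
          (fun x _ => Polynomial.hasDerivAt _ x)
        have hξd : eval ξ (derivative p) = 0 := by
          simpa [derivative_add, derivative_C] using hξ
        have hξZ : ξ ∉ Z := fun h => hgap ξ h ⟨hξmem.1, hξmem.2⟩
        have hξrol : ξ ∉ rol' := fun h => absurd (hrolgt ξ h v rfl) (not_lt.mpr hξmem.2.le)
        refine ⟨rts', insert ξ rol', ?_, hrts0, ?_, ?_, ?_, hrtsZ, ?_⟩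
        · rw [Finset.card_insert_of_notMem hξrol]; simp at hcard ⊢; omega
        · intro r hr
          rcases Finset.mem_insert.mp hr with rfl | hr
          · exact hξd
          · exact hrol0 r hr
        · rintro r hr h hh
          simp only [List.head?_cons, Option.some.injEq] at hh; subst hh
          exact lt_trans huv (hrtsgt r hr v rfl)
        · rintro r hr h hh
          simp only [List.head?_cons, Option.some.injEq] at hh; subst hh
          rcases Finset.mem_insert.mp hr with rfl | hr
          · exact hξmem.1
          · exact lt_trans huv (hrolgt r hr v rfl)
        · intro r hr
          rcases Finset.mem_insert.mp hr with rfl | hr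
          · exact hξZ
          · exact hrolZ r hr
      · -- u root of p+C a, v root of p + C b : IVT, decreasing
        have hvb : eval v (p + C b) = 0 := (hZ v hvZ).resolve_left hva
        have hfu : eval u (p + C c) = c - a := by
          simp only [eval_add, eval_C] at hua ⊢; linarith
        have hfv : eval v (p + C c) = c - b := by
          simp only [eval_add, eval_C] at hvb ⊢; linarith
        have h0 : (0:ℝ) ∈ Set.Ioo (eval v (p + C c)) (eval u (p + C c)) := by
          rw [hfu, hfv]; constructor <;> simp <;> linarith
        obtain ⟨ξ, hξmem, hξ⟩ := intermediate_value_Ioo' huv.le (hcont (p + C c)) h0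
        have hξZ : ξ ∉ Z := fun h => hgap ξ h ⟨hξmem.1, hξmem.2⟩
        have hξrts : ξ ∉ rts' := fun h => absurd (hrtsgt ξ h v rfl) (not_lt.mpr hξmem.2.le)
        refine ⟨insert ξ rts', rol', ?_, ?_, hrol0, ?_, ?_, ?_, hrolZ⟩
        · rw [Finset.card_insert_of_notMem hξrts]; simp at hcard ⊢; omega
        · intro r hr
          rcases Finset.mem_insert.mp hr with rfl | hr
          · exact hξ
          · exact hrts0 r hr
        · rintro r hr h hh
          simp only [List.head?_cons, Option.some.injEq] at hh; subst hh
          rcases Finset.mem_insert.mp hr with rfl | hr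
          · exact hξmem.1
          · exact lt_trans huv (hrtsgt r hr v rfl)
        · rintro r hr h hh
          simp only [List.head?_cons, Option.some.injEq] at hh; subst hh
          exact lt_trans huv (hrolgt r hr v rfl)
        · intro r hr
          rcases Finset.mem_insert.mp hr with rfl | hr
          · exact hξZ
          · exact hrtsZ r hr
      · -- u root of p + C b, v root of p + C a : IVT increasing
        have hub : eval u (p + C b) = 0 := (hZ u huZ).resolve_left hua
        have hfu : eval u (p + C c) = c - b := by
          simp only [eval_add, eval_C] at hub ⊢; linarith
        have hfv : eval v (p + C c) = c - a := by
          simp only [eval_add, eval_C] at hva ⊢; linarith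
        have h0 : (0:ℝ) ∈ Set.Ioo (eval u (p + C c)) (eval v (p + C c)) := by
          rw [hfu, hfv]; constructor <;> simp <;> linarith
        obtain ⟨ξ, hξmem, hξ⟩ := intermediate_value_Ioo huv.le (hcont (p + C c)) h0
        have hξZ : ξ ∉ Z := fun h => hgap ξ h ⟨hξmem.1, hξmem.2⟩
        have hξrts : ξ ∉ rts' := fun h => absurd (hrtsgt ξ h v rfl) (not_lt.mpr hξmem.2.le)
        refine ⟨insert ξ rts', rol', ?_, ?_, hrol0, ?_, ?_, ?_, hrolZ⟩
        · rw [Finset.card_insert_of_notMem hξrts]; simp at hcard ⊢; omega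
        · intro r hr
          rcases Finset.mem_insert.mp hr with rfl | hr
          · exact hξ
          · exact hrts0 r hr
        · rintro r hr h hh
          simp only [List.head?_cons, Option.some.injEq] at hh; subst hh
          rcases Finset.mem_insert.mp hr with rfl | hr
          · exact hξmem.1
          · exact lt_trans huv (hrtsgt r hr v rfl)
        · rintro r hr h hh
          simp only [List.head?_cons, Option.some.injEq] at hh; subst hh
          exact lt_trans huv (hrolgt r hr v rfl)
        · intro r hr
          rcases Finset.mem_insert.mp hr with rfl | hr
          · exact hξZ
          · exact hrtsZ r hr
      · -- both roots of p + C b : Rolle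
        have hub : eval u (p + C b) = 0 := (hZ u huZ).resolve_left hua
        have hvb : eval v (p + C b) = 0 := (hZ v hvZ).resolve_left hva
        obtain ⟨ξ, hξmem, hξ⟩ := exists_hasDerivAt_eq_zero (f' := fun x => eval x (derivative (p + C b)))
          huv (hcont (p + C b)) (hub.trans hvb.symm)
          (fun x _ => Polynomial.hasDerivAt _ x)
        have hξd : eval ξ (derivative p) = 0 := by
          simpa [derivative_add, derivative_C] using hξ
        have hξZ : ξ ∉ Z := fun h => hgap ξ h ⟨hξmem.1, hξmem.2⟩
        have hξrol : ξ ∉ rol' := fun h => absurd (hrolgt ξ h v rfl) (not_lt.mpr hξmem.2.le)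
        refine ⟨rts', insert ξ rol', ?_, hrts0, ?_, ?_, ?_, hrtsZ, ?_⟩
        · rw [Finset.card_insert_of_notMem hξrol]; simp at hcard ⊢; omega
        · intro r hr
          rcases Finset.mem_insert.mp hr with rfl | hr
          · exact hξd
          · exact hrol0 r hr
        · rintro r hr h hh
          simp only [List.head?_cons, Option.some.injEq] at hh; subst hh
          exact lt_trans huv (hrtsgt r hr v rfl)
        · rintro r hr h hh
          simp only [List.head?_cons, Option.some.injEq] at hh; subst hh
          rcases Finset.mem_insert.mp hr with rfl | hr
          · exact hξmem.1
          · exact lt_trans huv (hrolgt r hr v rfl)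
        · intro r hr
          rcases Finset.mem_insert.mp hr with rfl | hr
          · exact hξZ
          · exact hrolZ r hr

open scoped Classical in
lemma stmt0_bindcount (s : Finset ℝ) (f : ℝ → ℕ) (t : ℝ) :
    Multiset.count t (s.val.bind fun z => Multiset.replicate (f z) z)
      = if t ∈ s then f t else 0 := by
  classical
  rw [Multiset.count_bind]
  have h1 : (s.val.map fun z => Multiset.count t (Multiset.replicate (f z) z))
      = s.val.map fun z => if z = t then f z else 0 := by
    apply Multiset.map_congr rfl
    intro z _
    rw [Multiset.count_replicate]
  rw [h1]
  have h2 : (s.val.map fun z => if z = t then f z else 0).sum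
      = ∑ z ∈ s, if z = t then f z else 0 := (Finset.sum_eq_multiset_sum s _).symm
  rw [h2, Finset.sum_ite_eq']

/-- If `p+a` and `p+b` have all real roots, then for `c ∈ (a,b)` the polynomial
`p+c` has `n` real, distinct roots. -/
theorem stmt0 (p : Polynomial ℝ) (n : ℕ) (hn : 1 ≤ n) (hdeg : p.natDegree = n)
    (a b c : ℝ) (hab : a < b) (hac : a < c) (hcb : c < b)
    (ha : (p + C a).roots.card = n) (hb : (p + C b).roots.card = n) :
    (p + C c).roots.card = n ∧ (p + C c).roots.Nodup := by
  classical
  have hAne : ∀ d : ℝ, p + C d ≠ 0 := by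
    intro d h
    have : (p + C d).natDegree = n := by rw [natDegree_add_C, hdeg]
    rw [h, natDegree_zero] at this
    omega
  set A := p + C a with hA
  set B := p + C b with hB
  set Y := A.roots.toFinset with hYdef
  set X := B.roots.toFinset with hXdef
  have hXY : Disjoint Y X := by
    rw [Finset.disjoint_left]
    intro z hzY hzX
    rw [hYdef, Multiset.mem_toFinset, mem_roots (hAne a)] at hzY
    rw [hXdef, Multiset.mem_toFinset, mem_roots (hAne b)] at hzX
    have h1 : eval z p + a = 0 := by simpa [hA, IsRoot] using hzY
    have h2 : eval z p + b = 0 := by simpa [hB, IsRoot] using hzX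
    linarith [hab]
  set Z := Y ∪ X with hZdef
  have hZroots : ∀ z ∈ Z, eval z (p + C a) = 0 ∨ eval z (p + C b) = 0 := by
    intro z hz
    rcases Finset.mem_union.mp hz with h | h
    · left
      rw [hYdef, Multiset.mem_toFinset, mem_roots (hAne a)] at h
      exact h
    · right
      rw [hXdef, Multiset.mem_toFinset, mem_roots (hAne b)] at h
      exact h
  -- apply the core lemma to the sorted list of Z
  obtain ⟨rts, rol, hcard, hrts0, hrol0, _, _, hrtsZ, hrolZ⟩ :=
    stmt0_core p a b c hab.ne hac hcb Z hZroots (Z.sort (· ≤ ·))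
      (Finset.sortedLT_sort Z).pairwise
      (fun z hz => (Finset.mem_sort _).mp hz)
      (fun z hz => Or.inl ((Finset.mem_sort _).mpr hz))
  rw [Finset.length_sort] at hcard
  -- the derivative is nonzero
  have hd_ne : derivative p ≠ 0 := by
    intro h
    have := natDegree_eq_zero_of_derivative_eq_zero h
    omega
  -- the multiset of roots of the derivative that we can account for
  set M : Multiset ℝ :=
    (Y.val.bind fun z => Multiset.replicate (A.roots.count z - 1) z)
      + (X.val.bind fun z => Multiset.replicate (B.roots.count z - 1) z)
      + rol.val with hMdef
  have hMle : M ≤ (derivative p).roots := by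
    rw [Multiset.le_iff_count]
    intro t
    rw [hMdef]
    simp only [Multiset.count_add]
    rw [stmt0_bindcount, stmt0_bindcount]
    by_cases htY : t ∈ Y
    · have htX : t ∉ X := Finset.disjoint_left.mp hXY htY
      have htrol : Multiset.count t rol.val = 0 := by
        rw [Multiset.count_eq_zero]
        intro h
        exact hrolZ t (Finset.mem_val.mp h) (Finset.mem_union.mpr (Or.inl htY))
      have hroot : A.IsRoot t := by
        rw [hYdef, Multiset.mem_toFinset, mem_roots (hAne a)] at htY
        exact htY
      have hdA : derivative A = derivative p := by
        rw [hA]; simp [derivative_add, derivative_C]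
      have key : Multiset.count t (derivative p).roots = A.roots.count t - 1 := by
        rw [count_roots, ← hdA, derivative_rootMultiplicity_of_root hroot, count_roots]
      rw [if_pos htY, if_neg htX, htrol, key]
      omega
    · by_cases htX : t ∈ X
      · have htrol : Multiset.count t rol.val = 0 := by
          rw [Multiset.count_eq_zero]
          intro h
          exact hrolZ t (Finset.mem_val.mp h) (Finset.mem_union.mpr (Or.inr htX))
        have hroot : B.IsRoot t := by
          rw [hXdef, Multiset.mem_toFinset, mem_roots (hAne b)] at htX
          exact htX
        have hdB : derivative B = derivative p := by
          rw [hB]; simp [derivative_add, derivative_C]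
        have key : Multiset.count t (derivative p).roots = B.roots.count t - 1 := by
          rw [count_roots, ← hdB, derivative_rootMultiplicity_of_root hroot, count_roots]
        rw [if_pos htX, if_neg htY, htrol, key]
        omega
      · rw [if_neg htY, if_neg htX]
        by_cases htrol : t ∈ rol
        · have h1 : Multiset.count t rol.val = 1 :=
            Multiset.count_eq_one_of_mem rol.nodup (Finset.mem_val.mpr htrol)
          have hpos : 0 < Multiset.count t (derivative p).roots := by
            rw [count_roots]
            exact (rootMultiplicity_pos hd_ne).mpr (hrol0 t htrol)
          rw [h1]
          omega
        · have h1 : Multiset.count t rol.val = 0 := by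
            rw [Multiset.count_eq_zero]
            exact fun h => htrol (Finset.mem_val.mp h)
          rw [h1]
          omega
  -- cardinality computations
  have hYsum : ∑ z ∈ Y, A.roots.count z = n := by
    rw [hYdef, Multiset.toFinset_sum_count_eq, ha]
  have hXsum : ∑ z ∈ X, B.roots.count z = n := by
    rw [hXdef, Multiset.toFinset_sum_count_eq, hb]
  have hYpos : ∀ z ∈ Y, 1 ≤ A.roots.count z := by
    intro z hz
    rw [hYdef, Multiset.mem_toFinset] at hz
    exact Multiset.one_le_count_iff_mem.mpr hz
  have hXpos : ∀ z ∈ X, 1 ≤ B.roots.count z := by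
    intro z hz
    rw [hXdef, Multiset.mem_toFinset] at hz
    exact Multiset.one_le_count_iff_mem.mpr hz
  have hYcardsum : ∑ z ∈ Y, (A.roots.count z - 1) + Y.card = n := by
    have h1 : ∑ z ∈ Y, ((A.roots.count z - 1) + 1) = n := by
      rw [← hYsum]
      exact Finset.sum_congr rfl fun z hz => by have := hYpos z hz; omega
    rwa [Finset.sum_add_distrib, Finset.sum_const, smul_eq_mul, mul_one] at h1
  have hXcardsum : ∑ z ∈ X, (B.roots.count z - 1) + X.card = n := by
    have h1 : ∑ z ∈ X, ((B.roots.count z - 1) + 1) = n := by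
      rw [← hXsum]
      exact Finset.sum_congr rfl fun z hz => by have := hXpos z hz; omega
    rwa [Finset.sum_add_distrib, Finset.sum_const, smul_eq_mul, mul_one] at h1
  have hMcard : Multiset.card M = (∑ z ∈ Y, (A.roots.count z - 1))
      + (∑ z ∈ X, (B.roots.count z - 1)) + rol.card := by
    have cb : ∀ (s : Finset ℝ) (f : ℝ → ℕ),
        Multiset.card (s.val.bind fun z => Multiset.replicate (f z) z) = ∑ z ∈ s, f z := by
      intro s f
      rw [Multiset.card_bind]
      simp only [Function.comp, Multiset.card_replicate]
      exact (Finset.sum_eq_multiset_sum s f).symm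
    rw [hMdef]
    simp only [Multiset.card_add]
    rw [cb, cb]
    rfl
  have hMlecard : Multiset.card M ≤ n - 1 := by
    calc Multiset.card M ≤ Multiset.card (derivative p).roots := Multiset.card_le_card hMle
    _ ≤ (derivative p).natDegree := card_roots' _
    _ ≤ p.natDegree - 1 := natDegree_derivative_le p
    _ = n - 1 := by rw [hdeg]
  have hZcard : Z.card = Y.card + X.card := Finset.card_union_of_disjoint hXY
  -- conclude rts.card ≥ n
  have hrtscard : n ≤ rts.card := by
    have hYle : Y.card ≤ n := by
      calc Y.card ≤ Multiset.card A.roots := Multiset.toFinset_card_le _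
      _ = n := ha
    have hXle : X.card ≤ n := by
      calc X.card ≤ Multiset.card B.roots := Multiset.toFinset_card_le _
      _ = n := hb
    omega
  -- roots of p + C c
  have hsub : rts ⊆ (p + C c).roots.toFinset := by
    intro r hr
    rw [Multiset.mem_toFinset, mem_roots (hAne c)]
    exact hrts0 r hr
  have hcards : n ≤ (p + C c).roots.toFinset.card :=
    le_trans hrtscard (Finset.card_le_card hsub)
  have hle1 : (p + C c).roots.toFinset.card ≤ Multiset.card (p + C c).roots :=
    Multiset.toFinset_card_le _
  have hle2 : Multiset.card (p + C c).roots ≤ n := by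
    calc Multiset.card (p + C c).roots ≤ (p + C c).natDegree := card_roots' _
    _ = n := by rw [natDegree_add_C, hdeg]
  have hcardeq : Multiset.card (p + C c).roots = n := le_antisymm hle2 (le_trans hcards hle1)
  refine ⟨hcardeq, ?_⟩
  rw [← Multiset.toFinset_card_eq_card_iff_nodup]
  omega
end

section
/- Let A = S(a_1,...,a_n) be a cyclic weighted shift matrix with complex entries. Then f_A(t,x,y) = det(tI + x·Re(A) + y·Im(A)) is invariant under the rotation Φ sending (t,x,y) to (t, x·cos(2π/n) − y·sin(2π/n), x·sin(2π/n) + y·cos(2π/n)); that is, f_A(Φ(t,x,y)) = f_A(t,x,y). -/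
open Matrix Complex Real

/-- A cyclic weighted shift matrix: `A (i) (i+1) = a i` (indices mod `n`), zeros elsewhere. -/
def cyclicShift (n : ℕ) [NeZero n] (a : Fin n → ℂ) : Matrix (Fin n) (Fin n) ℂ :=
  Matrix.of fun i j => if j = i + 1 then a i else 0

/-- For a cyclic weighted shift matrix `A`, `f_A(t,x,y) = det(tI + x Re A + y Im A)`
is invariant under the rotation by angle `2π/n` about the `t`-axis. -/
theorem stmt3 (n : ℕ) [NeZero n] (a : Fin n → ℂ)
    (A : Matrix (Fin n) (Fin n) ℂ) (hA : A = cyclicShift n a)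
    (ReA ImA : Matrix (Fin n) (Fin n) ℂ)
    (hRe : ReA = (2 : ℂ)⁻¹ • (A + Aᴴ)) (hIm : ImA = (2 * Complex.I)⁻¹ • (A - Aᴴ))
    (f : ℝ → ℝ → ℝ → ℂ)
    (hf : ∀ t x y : ℝ, f t x y =
      Matrix.det ((t : ℂ) • (1 : Matrix (Fin n) (Fin n) ℂ) + (x : ℂ) • ReA + (y : ℂ) • ImA)) :
    ∀ t x y : ℝ,
      f t (x * Real.cos (2 * π / n) - y * Real.sin (2 * π / n))
        (x * Real.sin (2 * π / n) + y * Real.cos (2 * π / n)) = f t x y := by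
  intro t x y
  have hn : (n : ℂ) ≠ 0 := Nat.cast_ne_zero.2 (NeZero.ne n)
  set θ : ℝ := 2 * π / n with hθ
  set ω : ℂ := Complex.exp (↑θ * Complex.I) with hωdef
  have hω0 : ω ≠ 0 := Complex.exp_ne_zero _
  have hωn : ω ^ n = 1 := by
    rw [hωdef, ← Complex.exp_nat_mul]
    have h2 : (n : ℂ) * (↑θ * Complex.I) = 2 * ↑π * Complex.I := by
      rw [hθ]; push_cast; field_simp
    rw [h2, Complex.exp_two_pi_mul_I]
  set c : ℂ := (Real.cos θ : ℂ) with hc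
  set s : ℂ := (Real.sin θ : ℂ) with hs
  have hωeq : ω = c + s * Complex.I := by
    rw [hωdef, Complex.exp_mul_I, hc, hs, Complex.ofReal_cos, Complex.ofReal_sin]
  have hcs : c ^ 2 + s ^ 2 = 1 := by
    rw [hc, hs, Complex.ofReal_cos, Complex.ofReal_sin, Complex.cos_sq_add_sin_sq]
  have hmod : ∀ k : ℕ, ω ^ (k % n) = ω ^ k := by
    intro k
    conv_rhs => rw [← Nat.div_add_mod k n]
    rw [pow_add, pow_mul, hωn, one_pow, one_mul]
  have hstep : ∀ i : Fin n, ω ^ ((i + 1 : Fin n) : ℕ) = ω ^ (i : ℕ) * ω := by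
    intro i
    have h1 : ((i + 1 : Fin n) : ℕ) = ((i : ℕ) + 1) % n := by
      rw [Fin.val_add, Fin.val_one']
      conv_rhs => rw [Nat.add_mod, Nat.mod_eq_of_lt i.isLt]
    rw [h1, hmod, pow_succ]
  set Ω : Matrix (Fin n) (Fin n) ℂ := Matrix.diagonal fun i : Fin n => ω ^ (i : ℕ) with hΩdef
  have hAΩ : A * Ω = ω • (Ω * A) := by
    ext i j
    simp only [hA, hΩdef, cyclicShift, Matrix.mul_diagonal, Matrix.diagonal_mul,
      Matrix.smul_apply, Matrix.of_apply, smul_eq_mul]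
    split_ifs with h
    · subst h; rw [hstep i]; ring
    · ring
  have hAHΩ : Ω * Aᴴ = ω • (Aᴴ * Ω) := by
    ext i j
    simp only [hA, hΩdef, cyclicShift, Matrix.conjTranspose_apply, Matrix.mul_diagonal,
      Matrix.diagonal_mul, Matrix.smul_apply, Matrix.of_apply, smul_eq_mul]
    split_ifs with h
    · subst h; rw [hstep j]; ring
    · simp
  have h_decomp : ∀ u v : ℝ, (t : ℂ) • (1 : Matrix (Fin n) (Fin n) ℂ) + (u : ℂ) • ReA
      + (v : ℂ) • ImA = (t : ℂ) • 1 + (((u : ℂ) - Complex.I * v) / 2) • A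
      + (((u : ℂ) + Complex.I * v) / 2) • Aᴴ := by
    intro u v
    rw [hRe, hIm]
    ext i j
    simp only [Matrix.add_apply, Matrix.smul_apply, Matrix.sub_apply, smul_eq_mul]
    field_simp
    linear_combination ((v : ℂ) * (A i j - Aᴴ i j)) * Complex.I_sq
  set x' : ℝ := x * Real.cos θ - y * Real.sin θ with hx'
  set y' : ℝ := x * Real.sin θ + y * Real.cos θ with hy'
  have hx'c : (x' : ℂ) = x * c - y * s := by
    rw [hx', hc, hs]; push_cast; ring
  have hy'c : (y' : ℂ) = x * s + y * c := by
    rw [hy', hc, hs]; push_cast; ring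
  have hc' : (((x' : ℂ) - Complex.I * y') / 2) * ω = ((x : ℂ) - Complex.I * y) / 2 := by
    rw [hx'c, hy'c, hωeq]
    linear_combination (((x : ℂ) - Complex.I * y) / 2) * hcs
      - (((((x : ℂ) - Complex.I * y) * s ^ 2 + y * s * (c + Complex.I * s)) / 2)) * Complex.I_sq
  have hd' : (((x' : ℂ) + Complex.I * y') / 2) = (((x : ℂ) + Complex.I * y) / 2) * ω := by
    rw [hx'c, hy'c, hωeq]
    linear_combination (-((y : ℂ) * s) / 2) * Complex.I_sq
  have hM : ((t : ℂ) • (1 : Matrix (Fin n) (Fin n) ℂ)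
        + (((x' : ℂ) - Complex.I * y') / 2) • A + (((x' : ℂ) + Complex.I * y') / 2) • Aᴴ) * Ω
      = Ω * ((t : ℂ) • 1 + (((x : ℂ) - Complex.I * y) / 2) • A
        + (((x : ℂ) + Complex.I * y) / 2) • Aᴴ) := by
    rw [add_mul, add_mul, mul_add, mul_add, smul_mul_assoc, smul_mul_assoc, smul_mul_assoc,
      mul_smul_comm, mul_smul_comm, mul_smul_comm, one_mul, mul_one, hAΩ, hAHΩ,
      smul_smul, smul_smul, hc', hd', mul_comm _ ω, ← smul_smul]
  have hΩdet : Ω.det ≠ 0 := by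
    rw [hΩdef, Matrix.det_diagonal]
    exact Finset.prod_ne_zero_iff.2 fun i _ => pow_ne_zero _ hω0
  rw [hf, hf, h_decomp x y, h_decomp x' y']
  have hdet := congrArg Matrix.det hM
  rw [Matrix.det_mul, Matrix.det_mul, mul_comm Ω.det] at hdet
  exact mul_right_cancel₀ hΩdet hdet
end

section
/- For n ≥ 1, the dimension of the space of degree-n homogeneous polynomials in ℂ[t,u,v] that are invariant under the map (t,u,v) ↦ (t, ωu, ω^{−1}v), where ω = e^{2πi/n}, equals ⌊n/2⌋ + 3. -/
open MvPolynomial Complex Real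

noncomputable def mk3 (a b c : ℕ) : Fin 3 →₀ ℕ :=
  Finsupp.single 0 a + Finsupp.single 1 b + Finsupp.single 2 c

@[simp] lemma mk3_apply0 (a b c : ℕ) : mk3 a b c 0 = a := by
  simp [mk3, Finsupp.single_apply]

@[simp] lemma mk3_apply1 (a b c : ℕ) : mk3 a b c 1 = b := by
  simp [mk3, Finsupp.single_apply]

@[simp] lemma mk3_apply2 (a b c : ℕ) : mk3 a b c 2 = c := by
  simp [mk3, Finsupp.single_apply]

lemma eq_mk3 (d : Fin 3 →₀ ℕ) : d = mk3 (d 0) (d 1) (d 2) := by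
  ext i
  fin_cases i <;> simp

lemma degree3 (d : Fin 3 →₀ ℕ) : d.degree = d 0 + d 1 + d 2 := by
  rw [Finsupp.degree, ← Fin.sum_univ_three (fun i => d i)]
  exact Finset.sum_subset (Finset.subset_univ _)
    (fun x _ hx => by simpa using Finsupp.notMem_support_iff.mp hx)

/-- The space of degree-`n` homogeneous polynomials in `ℂ[t,u,v]` invariant under
`(t,u,v) ↦ (t, ωu, ω⁻¹v)`, `ω = e^{2πi/n}`, has dimension `⌊n/2⌋ + 3`. -/
theorem stmt6 (n : ℕ) (hn : 1 ≤ n)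
    (ω : ℂ) (hω : ω = Complex.exp (2 * π * Complex.I / n))
    (σ : MvPolynomial (Fin 3) ℂ →ₐ[ℂ] MvPolynomial (Fin 3) ℂ)
    (hσ : σ = MvPolynomial.aeval
      ![MvPolynomial.X 0, MvPolynomial.C ω * MvPolynomial.X 1,
        MvPolynomial.C ω⁻¹ * MvPolynomial.X 2]) :
    Module.finrank ℂ
      ↥(MvPolynomial.homogeneousSubmodule (Fin 3) ℂ n ⊓
        LinearMap.ker (σ.toLinearMap - LinearMap.id)) = n / 2 + 3 := by
  have hn0 : (n : ℂ) ≠ 0 := Nat.cast_ne_zero.mpr (by omega)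
  have hω0 : ω ≠ 0 := by rw [hω]; exact Complex.exp_ne_zero _
  have hprim : IsPrimitiveRoot ω n := hω ▸ Complex.isPrimitiveRoot_exp n (by omega)
  have hωn : ω ^ n = 1 := hprim.pow_eq_one
  -- action of σ on monomials
  have key : ∀ (d : Fin 3 →₀ ℕ) (c : ℂ),
      σ (monomial d c) = monomial d (ω ^ d 1 * ω⁻¹ ^ d 2 * c) := by
    intro d c
    rw [hσ, aeval_monomial, monomial_eq,
      Finsupp.prod_fintype _ _ (fun i => pow_zero _),
      Finsupp.prod_fintype _ _ (fun i => pow_zero _),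
      Fin.prod_univ_three, Fin.prod_univ_three]
    simp only [Matrix.cons_val_zero, Matrix.cons_val_one, Matrix.head_cons, Matrix.cons_val_two,
      Matrix.tail_cons, mul_pow, ← C_pow, C_mul, algebraMap_eq]
    ring
  have hcoeff : ∀ (p : MvPolynomial (Fin 3) ℂ) (d : Fin 3 →₀ ℕ),
      coeff d (σ p) = ω ^ d 1 * ω⁻¹ ^ d 2 * coeff d p := by
    intro p d
    conv_lhs => rw [p.as_sum]
    rw [map_sum]
    simp_rw [key, coeff_sum, coeff_monomial]
    rw [Finset.sum_ite_eq' p.support d]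
    split_ifs with h
    · rfl
    · rw [MvPolynomial.notMem_support_iff.mp h, mul_zero]
  -- condition on exponents
  have hcases : ∀ a b : ℕ, a + b ≤ n → ω ^ a = ω ^ b →
      a = b ∨ (a = 0 ∧ b = n) ∨ (a = n ∧ b = 0) := by
    intro a b hab h
    rcases lt_or_ge a n with ha | ha
    · rcases lt_or_ge b n with hb | hb
      · exact Or.inl (hprim.pow_inj ha hb h)
      · right; left; omega
    · right; right; omega
  have hωeq : ∀ a b : ℕ, ω ^ a * ω⁻¹ ^ b = 1 ↔ ω ^ a = ω ^ b := by
    intro a b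
    rw [inv_pow, mul_inv_eq_one₀ (pow_ne_zero _ hω0)]
  -- the finite set of exponents
  set D : Finset (Fin 3 →₀ ℕ) :=
    ((Finset.range (n / 2 + 1)).image fun j => mk3 (n - 2 * j) j j) ∪ {mk3 0 n 0, mk3 0 0 n}
    with hD
  have hmemD : ∀ d : Fin 3 →₀ ℕ, d ∈ D ↔
      d 0 + d 1 + d 2 = n ∧ (d 1 = d 2 ∨ (d 1 = 0 ∧ d 2 = n) ∨ (d 1 = n ∧ d 2 = 0)) := by
    intro d
    constructor
    · intro hd
      rw [hD, Finset.mem_union, Finset.mem_image] at hd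
      rcases hd with ⟨j, hj, rfl⟩ | hd
      · simp only [Finset.mem_range] at hj
        simp only [mk3_apply0, mk3_apply1, mk3_apply2]
        exact ⟨by omega, Or.inl trivial⟩
      · simp only [Finset.mem_insert, Finset.mem_singleton] at hd
        rcases hd with rfl | rfl
        · exact ⟨by simp, by simp⟩
        · exact ⟨by simp, by simp⟩
    · rintro ⟨hsum, h1 | ⟨h1, h2⟩ | ⟨h1, h2⟩⟩
      · rw [hD, Finset.mem_union, Finset.mem_image]
        left
        refine ⟨d 1, Finset.mem_range.mpr (by omega), ?_⟩
        have h0 : n - 2 * d 1 = d 0 := by omega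
        rw [h0]
        conv_rhs => rw [eq_mk3 d]
        rw [h1]
      · rw [hD, Finset.mem_union]
        right
        simp only [Finset.mem_insert, Finset.mem_singleton]
        right
        rw [eq_mk3 d, h1, h2, show d 0 = 0 by omega]
      · rw [hD, Finset.mem_union]
        right
        simp only [Finset.mem_insert, Finset.mem_singleton]
        left
        rw [eq_mk3 d, h1, h2, show d 0 = 0 by omega]
  -- scalar is 1 for d ∈ D
  have hscal : ∀ d : Fin 3 →₀ ℕ, d ∈ D → ω ^ d 1 * ω⁻¹ ^ d 2 = 1 := by
    intro d hd
    rcases (hmemD d).mp hd with ⟨-, h | ⟨h1, h2⟩ | ⟨h1, h2⟩⟩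
    · rw [h, inv_pow, mul_inv_cancel₀ (pow_ne_zero _ hω0)]
    · rw [h1, h2, pow_zero, one_mul, inv_pow, inv_eq_one, hωn]
    · rw [h1, h2, pow_zero, mul_one, hωn]
  set s : Finset (MvPolynomial (Fin 3) ℂ) := D.image fun d => monomial d (1 : ℂ) with hs
  -- equality of submodules
  have hMspan : (MvPolynomial.homogeneousSubmodule (Fin 3) ℂ n ⊓
        LinearMap.ker (σ.toLinearMap - LinearMap.id))
      = Submodule.span ℂ (s : Set (MvPolynomial (Fin 3) ℂ)) := by
    apply le_antisymm
    · rintro p ⟨hp1, hp2⟩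
      have hσp : σ p = p := by
        have := hp2
        simp only [SetLike.mem_coe, LinearMap.mem_ker, LinearMap.sub_apply, LinearMap.id_apply,
          AlgHom.toLinearMap_apply, sub_eq_zero] at this
        exact this
      rw [show p = ∑ v ∈ p.support, MvPolynomial.monomial v (coeff v p) from p.as_sum]
      apply Submodule.sum_mem
      intro v hv
      have hco : coeff v p ≠ 0 := MvPolynomial.mem_support_iff.mp hv
      have hdeg : v.degree = n := by
        rw [Finsupp.degree_eq_weight_one]
        exact hp1 hco
      have hfix : ω ^ v 1 * ω⁻¹ ^ v 2 = 1 := by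
        have := hcoeff p v
        rw [hσp] at this
        have h2 : (ω ^ v 1 * ω⁻¹ ^ v 2 - 1) * coeff v p = 0 := by
          rw [sub_mul, one_mul, ← this, sub_self]
        rcases mul_eq_zero.mp h2 with h | h
        · linear_combination h
        · exact absurd h hco
      have hvD : v ∈ D := by
        rw [hmemD]
        rw [degree3] at hdeg
        refine ⟨hdeg, ?_⟩
        exact hcases (v 1) (v 2) (by omega) ((hωeq _ _).mp hfix)
      have : MvPolynomial.monomial v (coeff v p) = coeff v p • monomial v (1 : ℂ) := by
        rw [MvPolynomial.smul_monomial, smul_eq_mul, mul_one]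
      rw [this]
      refine Submodule.smul_mem _ _ (Submodule.subset_span ?_)
      rw [hs]
      exact Finset.mem_coe.mpr (Finset.mem_image_of_mem _ hvD)
    · rw [Submodule.span_le]
      intro x hx
      simp only [Finset.coe_image, Set.mem_image, Finset.mem_coe, hs] at hx
      obtain ⟨d, hd, rfl⟩ := hx
      refine ⟨?_, ?_⟩
      · show MvPolynomial.IsHomogeneous _ n
        apply isHomogeneous_monomial
        rw [degree3]
        exact ((hmemD d).mp hd).1
      · show _ ∈ LinearMap.ker _
        simp only [LinearMap.mem_ker, LinearMap.sub_apply, LinearMap.id_apply,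
          AlgHom.toLinearMap_apply, sub_eq_zero]
        rw [key, hscal d hd, one_mul]
  rw [hMspan]
  -- linear independence and cardinality
  have hli : LinearIndependent ℂ
      (fun x : {x : MvPolynomial (Fin 3) ℂ // x ∈ s} => (x : MvPolynomial (Fin 3) ℂ)) := by
    have hsub : (s : Set (MvPolynomial (Fin 3) ℂ)) ⊆
        Set.range (MvPolynomial.basisMonomials (Fin 3) ℂ) := by
      intro x hx
      rw [hs] at hx
      simp only [Finset.coe_image, Set.mem_image, Finset.mem_coe] at hx
      obtain ⟨d, _, rfl⟩ := hx
      exact ⟨d, by rw [coe_basisMonomials]⟩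
    exact ((MvPolynomial.basisMonomials (Fin 3) ℂ).linearIndependent.linearIndepOn_id).mono hsub
  rw [finrank_span_finset_eq_card hli]
  have hinj : Function.Injective fun d : Fin 3 →₀ ℕ => monomial d (1 : ℂ) :=
    MvPolynomial.monomial_left_injective one_ne_zero
  rw [hs, Finset.card_image_of_injective _ hinj]
  -- card of D
  have hdisj : Disjoint ((Finset.range (n / 2 + 1)).image fun j => mk3 (n - 2 * j) j j)
      ({mk3 0 n 0, mk3 0 0 n} : Finset (Fin 3 →₀ ℕ)) := by
    rw [Finset.disjoint_right]
    intro d hd hd'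
    rw [Finset.mem_image] at hd'
    obtain ⟨j, hj, rfl⟩ := hd'
    simp only [Finset.mem_insert, Finset.mem_singleton] at hd
    rcases hd with h | h
    · have h1 := congrArg (fun f => f 1) h
      have h2 := congrArg (fun f => f 2) h
      simp at h1 h2
      omega
    · have h1 := congrArg (fun f => f 1) h
      have h2 := congrArg (fun f => f 2) h
      simp at h1 h2
      omega
  have hinj2 : Set.InjOn (fun j => mk3 (n - 2 * j) j j) (Finset.range (n / 2 + 1)) := by
    intro a _ b _ hab
    have := congrArg (fun f => f 1) hab
    simpa using this
  have hpair : (mk3 0 n 0 : Fin 3 →₀ ℕ) ≠ mk3 0 0 n := by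
    intro h
    have := congrArg (fun f => f 1) h
    simp at this
    omega
  rw [hD, Finset.card_union_of_disjoint hdisj, Finset.card_image_of_injOn hinj2,
    Finset.card_range, Finset.card_pair hpair]
end

section
/- Let f = t^n + Σ_{r=1}^{⌊n/2⌋} c_r t^{n−2r}(uv)^r + c_0·(u^n+v^n)/2 + c̃_0·(u^n−v^n)/(2i) with real c_r, c_0, c̃_0. Then f is hyperbolic with respect to (1,0,0) (in the (t,x,y)-coordinates with u = x+iy, v = x−iy) if and only if both univariate polynomials t^n + Σ_{r=1}^{⌊n/2⌋} c_r t^{n−2r} + √(c_0² + c̃_0²) and t^n + Σ_{r=1}^{⌊n/2⌋} c_r t^{n−2r} − √(c_0² + c̃_0²) have all real roots. -/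
open Polynomial Real

private lemma key_im (z : ℂ) (hz : z.im ≠ 0) :
    ∀ s : Multiset ℂ, (∀ r ∈ s, r.im = 0) → s ≠ 0 →
    z.im * (((derivative ((s.map (fun r => X - C r)).prod)).eval z) *
      (starRingEnd ℂ) (((s.map (fun r => X - C r)).prod).eval z)).im < 0 := by
  intro s
  induction s using Multiset.induction_on with
  | empty => intro _ hne; exact absurd rfl hne
  | cons a t ih =>
    intro hs _
    have ha : a.im = 0 := hs a (Multiset.mem_cons_self a t)
    have hwim : (z - a).im = z.im := by simp [Complex.sub_im, ha]
    rw [Multiset.map_cons, Multiset.prod_cons]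
    have hder : derivative ((X - C a) * (t.map (fun r => X - C r)).prod)
        = (t.map (fun r => X - C r)).prod
          + (X - C a) * derivative ((t.map (fun r => X - C r)).prod) := by
      rw [derivative_mul, derivative_X_sub_C, one_mul]
    rw [hder]
    set F := ((t.map (fun r => X - C r)).prod).eval z with hF
    set D := (derivative ((t.map (fun r => X - C r)).prod)).eval z with hD
    have heval1 : ((t.map (fun r => X - C r)).prod
        + (X - C a) * derivative ((t.map (fun r => X - C r)).prod)).eval z
        = F + (z - a) * D := by
      simp [hF, hD]
    have heval2 : ((X - C a) * (t.map (fun r => X - C r)).prod).eval z = (z - a) * F := by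
      simp [hF]
    rw [heval1, heval2]
    have hiden : (F + (z - a) * D) * (starRingEnd ℂ) ((z - a) * F)
        = ((Complex.normSq F : ℝ) : ℂ) * (starRingEnd ℂ) (z - a)
          + ((Complex.normSq (z - a) : ℝ) : ℂ) * (D * (starRingEnd ℂ) F) := by
      rw [map_mul, ← Complex.mul_conj, ← Complex.mul_conj]; ring
    rw [hiden]
    have him : (((Complex.normSq F : ℝ) : ℂ) * (starRingEnd ℂ) (z - a)
          + ((Complex.normSq (z - a) : ℝ) : ℂ) * (D * (starRingEnd ℂ) F)).im
        = Complex.normSq F * (-(z.im)) + Complex.normSq (z - a) * (D * (starRingEnd ℂ) F).im := by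
      simp [Complex.add_im, Complex.mul_im, Complex.conj_im, Complex.conj_re, hwim, ha]
    rw [him]
    by_cases ht : t = 0
    · subst ht
      have hF1 : F = 1 := by simp [hF]
      have hD0 : D = 0 := by simp [hD]
      rw [hF1, hD0]
      simp only [map_one, zero_mul, Complex.zero_im, mul_zero, add_zero, Complex.normSq_one,
        one_mul]
      nlinarith [mul_self_pos.mpr hz]
    · have h1 := ih (fun r hr => hs r (Multiset.mem_cons_of_mem hr)) ht
      have h2 : 0 < Complex.normSq (z - a) := by
        apply Complex.normSq_pos.mpr
        intro h0
        rw [h0] at hwim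
        simp at hwim
        exact hz hwim.symm
      nlinarith [Complex.normSq_nonneg F, sq_nonneg z.im,
        mul_nonneg (Complex.normSq_nonneg F) (sq_nonneg z.im)]

private lemma crux (n : ℕ) (hn : 1 ≤ n) (q : Polynomial ℝ) (hm : q.Monic)
    (hdeg : q.degree = (n : WithBot ℕ)) (a b s : ℝ) (has : a ≤ s) (hsb : s ≤ b)
    (ha : (q + C a).roots.card = n) (hb : (q + C b).roots.card = n) :
    (q + C s).roots.card = n := by
  have h0n : (0 : WithBot ℕ) < (n : WithBot ℕ) := by exact_mod_cast hn
  have hmt : ∀ t : ℝ, (q + C t).Monic := fun t =>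
    hm.add_of_left (lt_of_le_of_lt degree_C_le (by rw [hdeg]; exact h0n))
  have hdegt : ∀ t : ℝ, (q + C t).degree = (n : WithBot ℕ) := fun t => by
    rw [degree_add_eq_left_of_degree_lt, hdeg]
    rw [hdeg]; exact lt_of_le_of_lt degree_C_le h0n
  have hnatt : ∀ t : ℝ, (q + C t).natDegree = n := fun t =>
    natDegree_eq_of_degree_eq_some (hdegt t)
  rcases has.eq_or_lt with rfl | has'
  · exact ha
  rcases hsb.eq_or_lt with rfl | hsb'
  · exact hb
  -- all complex roots of q + C s are real
  have hroot : ∀ z ∈ ((q + C s).map (algebraMap ℝ ℂ)).roots, z.im = 0 := by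
    intro z hz
    by_contra hzim
    have hzroot : ((q + C s).map (algebraMap ℝ ℂ)).eval z = 0 := isRoot_of_mem_roots hz
    have hqz : (q.map (algebraMap ℝ ℂ)).eval z = -(s : ℂ) := by
      rw [Polynomial.map_add, Polynomial.map_C, eval_add, eval_C,
        show (algebraMap ℝ ℂ) s = (s : ℂ) from rfl] at hzroot
      linear_combination hzroot
    have key : ∀ u : ℝ, (q + C u).roots.card = n →
        z.im * ((((derivative q).map (algebraMap ℝ ℂ)).eval z) * ((u - s : ℝ) : ℂ)).im < 0 := by
      intro u hu
      have hprod : ((q + C u).roots.map (fun x => X - C x)).prod = q + C u := by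
        have h := C_leadingCoeff_mul_prod_multiset_X_sub_C (p := q + C u)
          (by rw [hnatt u]; exact hu)
        rwa [(hmt u).leadingCoeff, map_one, one_mul] at h
      have hsUreal : ∀ r ∈ (q + C u).roots.map (fun x : ℝ => (x : ℂ)), r.im = 0 := by
        intro r hr
        obtain ⟨x, _, rfl⟩ := Multiset.mem_map.mp hr
        simp
      have hsUne : (q + C u).roots.map (fun x : ℝ => (x : ℂ)) ≠ 0 := by
        intro h0
        have hcz : (q + C u).roots.card = 0 := by
          have := congrArg Multiset.card h0
          simpa using this
        omega
      have hmap : (((q + C u).roots.map (fun x : ℝ => (x : ℂ))).map (fun r => X - C r)).prod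
          = (q + C u).map (algebraMap ℝ ℂ) := by
        conv_rhs => rw [← hprod]
        rw [Polynomial.map_multiset_prod, Multiset.map_map, Multiset.map_map]
        apply congrArg
        apply Multiset.map_congr rfl
        intro x _
        simp
      have h1 := key_im z hzim ((q + C u).roots.map (fun x : ℝ => (x : ℂ))) hsUreal hsUne
      rw [hmap] at h1
      have hder : derivative ((q + C u).map (algebraMap ℝ ℂ))
          = (derivative q).map (algebraMap ℝ ℂ) := by
        simp only [derivative_map, derivative_add, derivative_C, add_zero]
      have hev : ((q + C u).map (algebraMap ℝ ℂ)).eval z = ((u - s : ℝ) : ℂ) := by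
        rw [Polynomial.map_add, Polynomial.map_C, eval_add, eval_C, hqz]
        have : algebraMap ℝ ℂ u = (u : ℂ) := rfl
        rw [this]
        push_cast
        ring
      rw [hder, hev, Complex.conj_ofReal] at h1
      exact h1
    have hA := key a ha
    have hB := key b hb
    set D := ((derivative q).map (algebraMap ℝ ℂ)).eval z with hDdef
    have himA : (D * ((a - s : ℝ) : ℂ)).im = D.im * (a - s) := by
      simp [Complex.mul_im]
    have himB : (D * ((b - s : ℝ) : ℂ)).im = D.im * (b - s) := by
      simp [Complex.mul_im]
    rw [himA] at hA
    rw [himB] at hB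
    nlinarith [hA, hB, mul_pos (sub_pos.mpr hsb') (sub_pos.mpr has')]
  -- conclude
  have hMcm : ((q + C s).map (algebraMap ℝ ℂ)).Monic := (hmt s).map _
  have hMcnat : ((q + C s).map (algebraMap ℝ ℂ)).natDegree = n := by
    rw [natDegree_map, hnatt s]
  have hMccard : ((q + C s).map (algebraMap ℝ ℂ)).roots.card = n := by
    have hsp : Splits ((q + C s).map (algebraMap ℝ ℂ)) :=
      IsAlgClosed.splits _
    rw [splits_iff_card_roots.mp hsp, hMcnat]
  have hMceq : ((q + C s).map (algebraMap ℝ ℂ))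
      = ((((q + C s).map (algebraMap ℝ ℂ)).roots).map (fun x => X - C x)).prod := by
    have h := C_leadingCoeff_mul_prod_multiset_X_sub_C (p := (q + C s).map (algebraMap ℝ ℂ))
      (by rw [hMcnat]; exact hMccard)
    rw [hMcm.leadingCoeff, map_one, one_mul] at h
    exact h.symm
  have htmap : ((((q + C s).map (algebraMap ℝ ℂ)).roots).map Complex.re).map
        (fun x : ℝ => (x : ℂ))
      = (((q + C s).map (algebraMap ℝ ℂ)).roots) := by
    rw [Multiset.map_map]
    have h2 : (((q + C s).map (algebraMap ℝ ℂ)).roots).map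
          ((fun x : ℝ => (x : ℂ)) ∘ Complex.re)
        = (((q + C s).map (algebraMap ℝ ℂ)).roots).map id :=
      Multiset.map_congr rfl (fun z hz => Complex.ext (by simp) (by simp [hroot z hz]))
    rw [h2, Multiset.map_id]
  have hMceq2 : (q + C s).map (algebraMap ℝ ℂ)
      = ((((((q + C s).map (algebraMap ℝ ℂ)).roots).map Complex.re).map
          (fun x : ℝ => X - C x)).prod).map (algebraMap ℝ ℂ) := by
    rw [Polynomial.map_multiset_prod, Multiset.map_map]
    conv_lhs => rw [hMceq, ← htmap, Multiset.map_map]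
    apply congrArg
    apply Multiset.map_congr rfl
    intro x _
    simp
  have heq2 : q + C s
      = (((((q + C s).map (algebraMap ℝ ℂ)).roots).map Complex.re).map
          (fun x : ℝ => X - C x)).prod :=
    Polynomial.map_injective _ (algebraMap ℝ ℂ).injective hMceq2
  rw [heq2, roots_multiset_prod_X_sub_C, Multiset.card_map]
  exact hMccard

private lemma exists_theta (n : ℕ) (hn : 1 ≤ n) (φ : ℝ) :
    ∃ θ : ℝ, θ ∈ Set.Ico 0 (2 * π) ∧ Real.cos (n * θ) = Real.cos φ ∧
      Real.sin (n * θ) = Real.sin φ := by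
  have hpi := Real.pi_pos
  set k : ℤ := ⌊φ / (2 * π)⌋ with hk
  set ψ : ℝ := φ - k * (2 * π) with hψ
  have h2π : (0 : ℝ) < 2 * π := by linarith
  have hψ0 : 0 ≤ ψ := by
    have h := (le_div_iff₀ h2π).mp (Int.floor_le (φ / (2 * π)))
    rw [hψ]; linarith
  have hψlt : ψ < 2 * π := by
    have h := (div_lt_iff₀ h2π).mp (Int.lt_floor_add_one (φ / (2 * π)))
    rw [hψ]
    nlinarith [h]
  have hn0 : (n : ℝ) ≠ 0 := by positivity
  have hnθ : (n : ℝ) * (ψ / n) = ψ := by field_simp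
  have hψφ : ψ = φ + (-k : ℤ) * (2 * π) := by push_cast; rw [hψ]; ring
  refine ⟨ψ / n, Set.mem_Ico.mpr ⟨by positivity, ?_⟩, ?_, ?_⟩
  · exact lt_of_le_of_lt (div_le_self hψ0 (by exact_mod_cast hn)) hψlt
  · rw [hnθ, hψφ, Real.cos_add_int_mul_two_pi]
  · rw [hnθ, hψφ, Real.sin_add_int_mul_two_pi]

/-- For `f = tⁿ + Σ c_r t^{n−2r}(uv)^r + c₀(uⁿ+vⁿ)/2 + c̃₀(uⁿ−vⁿ)/(2i)`,
hyperbolicity w.r.t. `(1,0,0)` — i.e. `f(t,e^{iθ},e^{−iθ}) = p(t) + c₀cos(nθ) + c̃₀sin(nθ)`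
has all real roots for every `θ` — is equivalent to `p ± √(c₀² + c̃₀²)` having all real roots. -/
theorem stmt11 (n : ℕ) (hn : 1 ≤ n) (c : ℕ → ℝ) (c0 ctil : ℝ)
    (p : Polynomial ℝ)
    (hp : p = X ^ n + ∑ r ∈ Finset.Icc 1 (n / 2), C (c r) * X ^ (n - 2 * r)) :
    (∀ θ : ℝ, θ ∈ Set.Ico 0 (2 * π) →
        (p + C (c0 * Real.cos (n * θ) + ctil * Real.sin (n * θ))).roots.card = n) ↔
      ((p + C (Real.sqrt (c0 ^ 2 + ctil ^ 2))).roots.card = n ∧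
        (p - C (Real.sqrt (c0 ^ 2 + ctil ^ 2))).roots.card = n) := by
  have hpi := Real.pi_pos
  have hsumdeg : (∑ r ∈ Finset.Icc 1 (n / 2), C (c r) * X ^ (n - 2 * r)).degree
      < ((n : ℕ) : WithBot ℕ) := by
    apply lt_of_le_of_lt (degree_sum_le _ _)
    rw [Finset.sup_lt_iff (show (⊥ : WithBot ℕ) < ((n : ℕ) : WithBot ℕ) by
      exact_mod_cast WithBot.bot_lt_coe n)]
    intro r hr
    have hr1 : 1 ≤ r := (Finset.mem_Icc.mp hr).1
    refine lt_of_le_of_lt (degree_C_mul_X_pow_le _ _) ?_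
    exact_mod_cast Nat.sub_lt (by omega) (by omega)
  have hmono : p.Monic := by rw [hp]; exact monic_X_pow_add hsumdeg
  have hdeg : p.degree = (n : WithBot ℕ) := by
    rw [hp, degree_add_eq_left_of_degree_lt (by rwa [degree_X_pow]), degree_X_pow]
  set R := Real.sqrt (c0 ^ 2 + ctil ^ 2) with hR
  have hR0 : 0 ≤ R := Real.sqrt_nonneg _
  constructor
  · intro h
    by_cases h0 : c0 ^ 2 + ctil ^ 2 = 0
    · have hc0 : c0 = 0 := by nlinarith [sq_nonneg c0, sq_nonneg ctil]
      have hct : ctil = 0 := by nlinarith [sq_nonneg c0, sq_nonneg ctil]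
      have h00 := h 0 (Set.mem_Ico.mpr ⟨le_refl 0, by positivity⟩)
      rw [hc0, hct] at h00
      simp only [zero_mul, add_zero, map_zero] at h00
      have hRz : R = 0 := by rw [hR, hc0, hct]; simp
      rw [hRz]
      simp only [map_zero, add_zero, sub_zero]
      exact ⟨h00, h00⟩
    · have hpos : 0 < c0 ^ 2 + ctil ^ 2 := lt_of_le_of_ne (by positivity) (Ne.symm h0)
      have hRpos : 0 < R := Real.sqrt_pos.mpr hpos
      set z : ℂ := ⟨c0, ctil⟩ with hz
      have hre : z.re = c0 := rfl
      have him' : z.im = ctil := rfl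
      have hz0 : z ≠ 0 := by
        intro hzz
        have h1 : c0 = 0 := by rw [← hre, hzz, Complex.zero_re]
        have h2 : ctil = 0 := by rw [← him', hzz, Complex.zero_im]
        exact h0 (by rw [h1, h2]; ring)
      have habs : ‖z‖ = R := by
        rw [Complex.norm_def, Complex.normSq_apply, hre, him', hR]
        congr 1
        ring
      have hcos : Real.cos (Complex.arg z) = c0 / R := by
        rw [Complex.cos_arg hz0, habs, hre]
      have hsin : Real.sin (Complex.arg z) = ctil / R := by
        rw [Complex.sin_arg, habs, him']
      constructor
      · obtain ⟨θ, hθ, hc, hs⟩ := exists_theta n hn (Complex.arg z)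
        have hh := h θ hθ
        rw [hc, hs, hcos, hsin] at hh
        have hR2 : R * R = c0 ^ 2 + ctil ^ 2 := Real.mul_self_sqrt (le_of_lt hpos)
        have hval : c0 * (c0 / R) + ctil * (ctil / R) = R := by
          have hexp : c0 * (c0 / R) + ctil * (ctil / R) = (c0 ^ 2 + ctil ^ 2) / R := by ring
          rw [hexp, ← hR2]
          field_simp
        rwa [hval] at hh
      · obtain ⟨θ, hθ, hc, hs⟩ := exists_theta n hn (Complex.arg z + π)
        have hh := h θ hθ
        rw [hc, hs, Real.cos_add_pi, Real.sin_add_pi, hcos, hsin] at hh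
        have hR2 : R * R = c0 ^ 2 + ctil ^ 2 := Real.mul_self_sqrt (le_of_lt hpos)
        have hval : c0 * -(c0 / R) + ctil * -(ctil / R) = -R := by
          have hexp : c0 * -(c0 / R) + ctil * -(ctil / R) = -((c0 ^ 2 + ctil ^ 2) / R) := by
            ring
          rw [hexp, ← hR2]
          field_simp
        rw [hval, map_neg, ← sub_eq_add_neg] at hh
        exact hh
  · rintro ⟨h1, h2⟩ θ hθ
    set s := c0 * Real.cos (n * θ) + ctil * Real.sin (n * θ) with hs
    have hs2 : s ^ 2 ≤ R ^ 2 := by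
      rw [hR, Real.sq_sqrt (by positivity), hs]
      nlinarith [Real.sin_sq_add_cos_sq ((n : ℝ) * θ),
        sq_nonneg (c0 * Real.sin ((n : ℝ) * θ) - ctil * Real.cos ((n : ℝ) * θ))]
    have habs : |s| ≤ R := by
      rw [← Real.sqrt_sq_eq_abs]
      calc Real.sqrt (s ^ 2) ≤ Real.sqrt (R ^ 2) := Real.sqrt_le_sqrt hs2
        _ = R := Real.sqrt_sq hR0
    obtain ⟨hl, hr⟩ := abs_le.mp habs
    have h2' : (p + C (-R)).roots.card = n := by rwa [map_neg, ← sub_eq_add_neg]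
    exact crux n hn p hmono hdeg (-R) R s hl hr h2' h1
end

section
/- Let p(t) = t^n + Σ_{r=1}^{⌊n/2⌋} c_r t^{n−2r} with real coefficients and s ≥ 0. If both p(t)+s and p(t)−s have all real distinct roots, then for every θ, the polynomial p(t) + s·cos(θ) has all real distinct roots. -/
open Polynomial Set

lemma no_double (p : Polynomial ℝ) (s : ℝ) (hs : 0 < s) (n : ℕ) (hn : 2 ≤ n)
    (hdeg : p.natDegree = n)
    (hBc : (p + C s).roots.card = n) (hBn : (p + C s).roots.Nodup)
    (x y : ℝ) (hxy : x < y) (hx : p.eval x = s) (hy : p.eval y = s)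
    (hin : ∀ t, x < t → t < y → (p.eval t)^2 < s^2) : False := by
  -- the set B of roots of p + s
  have hq0 : p + C s ≠ 0 := by
    intro h
    rw [h] at hBc
    simp at hBc
    omega
  set B := (p + C s).roots.toFinset with hBdef
  have hBcard : B.card = n := by
    rw [hBdef, Multiset.toFinset_card_eq_card_iff_nodup.mpr hBn, hBc]
  set b := B.orderEmbOfFin hBcard with hbdef
  have hbval : ∀ i : Fin n, p.eval (b i) = -s := by
    intro i
    have hm : (b i : ℝ) ∈ B := Finset.orderEmbOfFin_mem B hBcard i
    rw [hBdef, Multiset.mem_toFinset, mem_roots hq0] at hm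
    have := hm
    simp only [IsRoot, eval_add, eval_C] at this
    linarith
  -- derivative facts
  have hd0 : p.derivative ≠ 0 := by
    intro h
    have := Polynomial.natDegree_eq_zero_of_derivative_eq_zero h
    omega
  set R := p.derivative.roots.toFinset with hRdef
  have hRcard : R.card ≤ n - 1 := by
    calc R.card ≤ Multiset.card p.derivative.roots := Multiset.toFinset_card_le _
    _ ≤ p.derivative.natDegree := Polynomial.card_roots' _
    _ ≤ n - 1 := by have := Polynomial.natDegree_derivative_le p; omega
  have hmemR : ∀ t : ℝ, p.derivative.eval t = 0 → t ∈ R := by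
    intro t ht
    rw [hRdef, Multiset.mem_toFinset, mem_roots hd0]
    exact ht
  -- Rolle between points with equal values
  have rolle : ∀ u v : ℝ, u < v → p.eval u = p.eval v →
      ∃ r ∈ Ioo u v, p.derivative.eval r = 0 := by
    intro u v huv he
    obtain ⟨r, hr, hr0⟩ := exists_deriv_eq_zero huv p.continuousOn he
    refine ⟨r, hr, ?_⟩
    rwa [Polynomial.deriv] at hr0
  -- critical points between consecutive roots of p + s
  have key : ∀ j : Fin (n-1), ∃ r ∈ Ioo (b ⟨j.1, by omega⟩) (b ⟨j.1+1, by have := j.2; omega⟩),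
      p.derivative.eval r = 0 := by
    intro j
    apply rolle
    · exact (b : Fin n ↪o ℝ).strictMono (by simp [Fin.lt_def])
    · rw [hbval, hbval]
  choose ρ hρ hρ0 using key
  have hρmono : StrictMono ρ := by
    intro i j hij
    have h1 : ρ i < b ⟨i.1+1, by have := i.2; omega⟩ := (hρ i).2
    have h2 : b ⟨i.1+1, by have := i.2; omega⟩ ≤ b ⟨j.1, by omega⟩ :=
      (b : Fin n ↪o ℝ).monotone (by simp [Fin.le_def]; exact hij)
    have h3 : b ⟨j.1, by omega⟩ < ρ j := (hρ j).1
    linarith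
  -- the image of ρ is all of R
  have hTR : Finset.image ρ Finset.univ = R := by
    apply Finset.eq_of_subset_of_card_le
    · intro t ht
      rw [Finset.mem_image] at ht
      obtain ⟨j, _, rfl⟩ := ht
      exact hmemR _ (hρ0 j)
    · rw [Finset.card_image_of_injective _ hρmono.injective, Finset.card_univ, Fintype.card_fin]
      exact hRcard
  have hall : ∀ t : ℝ, p.derivative.eval t = 0 → ∃ j : Fin (n-1), ρ j = t := by
    intro t ht
    have : t ∈ Finset.image ρ Finset.univ := hTR ▸ hmemR t ht
    rw [Finset.mem_image] at this
    obtain ⟨j, _, hj⟩ := this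
    exact ⟨j, hj⟩
  -- Rolle applied to x and y
  obtain ⟨r, hrI, hr0⟩ := rolle x y hxy (by rw [hx, hy])
  obtain ⟨j, hj⟩ := hall r hr0
  set u : ℝ := b ⟨j.1, by omega⟩ with hudef
  have hur : u < r ∧ r < b ⟨j.1+1, by have := j.2; omega⟩ := by
    constructor
    · rw [← hj]; exact (hρ j).1
    · rw [← hj]; exact (hρ j).2
  have hpr1 : p.eval r < s := by nlinarith [hin r hrI.1 hrI.2, hs]
  have hux : u < x := by
    rcases lt_trichotomy u x with h | h | h
    · exact h
    · exfalso; have := hbval ⟨j.1, by omega⟩; rw [← hudef, h] at this; linarith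
    · exfalso
      have h2 : u < y := lt_trans hur.1 hrI.2
      have := hin u h h2
      have hbv := hbval ⟨j.1, by omega⟩
      rw [← hudef] at hbv
      nlinarith
  -- p is injective on [u, r]
  have hinj : InjOn (fun t => p.eval t) (Icc u r) := by
    have main : ∀ a ∈ Icc u r, ∀ c ∈ Icc u r, a < c → p.eval a = p.eval c → False := by
      intro a ha c hc h hac
      obtain ⟨z, hzI, hz0⟩ := rolle a c h hac
      obtain ⟨j', hj'⟩ := hall z hz0
      have hz1 : u < z ∧ z < r := by
        constructor
        · calc u ≤ a := ha.1
            _ < z := hzI.1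
        · calc z < c := hzI.2
            _ ≤ r := hc.2
      have hzj' : b ⟨j'.1, by omega⟩ < z ∧ z < b ⟨j'.1+1, by have := j'.2; omega⟩ := by
        rw [← hj']; exact ⟨(hρ j').1, (hρ j').2⟩
      rcases lt_trichotomy j'.1 j.1 with hjj | hjj | hjj
      · have : b ⟨j'.1+1, by have := j'.2; omega⟩ ≤ u := by
          rw [hudef]
          exact (b : Fin n ↪o ℝ).monotone (by simp [Fin.le_def]; omega)
        linarith [hzj'.2, hz1.1]
      · have hjeq : j' = j := Fin.ext hjj
        rw [hjeq, hj] at hj'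
        linarith [hz1.2, hj'.symm ▸ (le_refl z)]
      · have : b ⟨j.1+1, by have := j.2; omega⟩ ≤ b ⟨j'.1, by omega⟩ :=
          (b : Fin n ↪o ℝ).monotone (by simp [Fin.le_def]; omega)
        linarith [hur.2, hzj'.1, hz1.2]
    intro a ha c hc hac
    rcases lt_trichotomy a c with h | h | h
    · exact (main a ha c hc h hac).elim
    · exact h
    · exact (main c hc a ha h hac.symm).elim
  have hcont : ContinuousOn (fun t => p.eval t) (Icc u r) := p.continuousOn
  have hur' : u ≤ r := le_of_lt hur.1
  rcases ContinuousOn.strictMonoOn_of_injOn_Icc' hur' hcont hinj with hmono | hanti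
  · -- monotone: p x < p r, but p x = s > p r
    have hxm : x ∈ Icc u r := ⟨le_of_lt hux, le_of_lt hrI.1⟩
    have := hmono hxm (right_mem_Icc.mpr hur') hrI.1
    simp only at this
    rw [hx] at this
    linarith
  · -- antitone: p u > p x, i.e. -s > s
    have hxm : x ∈ Icc u r := ⟨le_of_lt hux, le_of_lt hrI.1⟩
    have := hanti (left_mem_Icc.mpr hur') hxm hux
    simp only at this
    have hbv := hbval ⟨j.1, by omega⟩
    rw [← hudef] at hbv
    rw [hx, hbv] at this
    linarith


/-- If `p ± s` have all real distinct roots (`s ≥ 0`), then `p + s·cos θ` has all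
real distinct roots for every `θ`, where `p = tⁿ + Σ c_r t^{n−2r}`. -/
theorem stmt12 (n : ℕ) (hn : 1 ≤ n) (c : ℕ → ℝ) (s : ℝ) (hs : 0 ≤ s)
    (p : Polynomial ℝ)
    (hp : p = X ^ n + ∑ r ∈ Finset.Icc 1 (n / 2), C (c r) * X ^ (n - 2 * r))
    (hplus : (p + C s).roots.card = n ∧ (p + C s).roots.Nodup)
    (hminus : (p - C s).roots.card = n ∧ (p - C s).roots.Nodup) :
    ∀ θ : ℝ, (p + C (s * Real.cos θ)).roots.card = n ∧ (p + C (s * Real.cos θ)).roots.Nodup := by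
  -- degree and monicity facts
  have hdegg : (∑ r ∈ Finset.Icc 1 (n / 2), C (c r) * X ^ (n - 2 * r)).degree < ((n : ℕ) : WithBot ℕ) := by
    apply lt_of_le_of_lt (Polynomial.degree_sum_le _ _)
    rw [Finset.sup_lt_iff (by exact_mod_cast WithBot.bot_lt_coe n)]
    intro r hr
    apply lt_of_le_of_lt (degree_C_mul_X_pow_le _ _)
    rw [Finset.mem_Icc] at hr
    have h2 : n - 2 * r < n := by omega
    exact_mod_cast h2
  have hmono : p.Monic := by rw [hp]; exact monic_X_pow_add hdegg
  have hdegp : p.degree = ((n : ℕ) : WithBot ℕ) := by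
    rw [hp, degree_add_eq_left_of_degree_lt (by rw [degree_X_pow]; exact hdegg), degree_X_pow]
  have hpdeg : p.natDegree = n := natDegree_eq_of_degree_eq_some hdegp
  have hCdeg : ∀ a : ℝ, (C a).degree < p.degree := by
    intro a
    apply lt_of_le_of_lt degree_C_le
    rw [hdegp]
    exact_mod_cast Nat.pos_of_ne_zero (by omega)
  have hmsub : (p - C s).Monic := by
    rw [sub_eq_add_neg, ← map_neg]
    exact hmono.add_of_left (hCdeg _)
  have hmadd : (p + C s).Monic := hmono.add_of_left (hCdeg _)
  -- nonzero-ness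
  have hsub0 : p - C s ≠ 0 := hmsub.ne_zero
  have hadd0 : p + C s ≠ 0 := hmadd.ne_zero
  intro θ
  set cθ := s * Real.cos θ with hcθ
  have hc1 : cθ ≤ s := by nlinarith [Real.cos_le_one θ]
  have hc2 : -s ≤ cθ := by nlinarith [Real.neg_one_le_cos θ]
  by_cases h1 : cθ = s
  · rw [h1]; exact hplus
  by_cases h2 : cθ = -s
  · rw [h2, map_neg, ← sub_eq_add_neg]; exact hminus
  have hlt1 : cθ < s := lt_of_le_of_ne hc1 h1
  have hlt2 : -s < cθ := lt_of_le_of_ne (by linarith) (by intro hh; exact h2 hh.symm)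
  have hs0 : 0 < s := by linarith
  -- the root sets
  have hAmem : ∀ t : ℝ, t ∈ (p - C s).roots.toFinset ↔ p.eval t = s := by
    intro t
    rw [Multiset.mem_toFinset, mem_roots hsub0, IsRoot, eval_sub, eval_C, sub_eq_zero]
  have hBmem : ∀ t : ℝ, t ∈ (p + C s).roots.toFinset ↔ p.eval t = -s := by
    intro t
    rw [Multiset.mem_toFinset, mem_roots hadd0, IsRoot, eval_add, eval_C]
    constructor <;> intro h <;> linarith
  -- the product polynomial F
  set F := (p - C s) * (p + C s) with hFdef
  have hF0 : F ≠ 0 := mul_ne_zero hsub0 hadd0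
  have hFroots : F.roots = (p - C s).roots + (p + C s).roots := roots_mul hF0
  have hFnodup : F.roots.Nodup := by
    rw [hFroots]
    rw [Multiset.nodup_add]
    refine ⟨hminus.2, hplus.2, Multiset.disjoint_left.mpr ?_⟩
    intro a ha hb
    rw [mem_roots hsub0] at ha
    rw [mem_roots hadd0] at hb
    simp only [IsRoot, eval_sub, eval_add, eval_C, sub_eq_zero] at ha hb
    have : p.eval a = -s := by linarith
    rw [ha] at this
    linarith
  have hFcard : Multiset.card F.roots = 2 * n := by
    rw [hFroots, Multiset.card_add, hminus.1, hplus.1]; ring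
  have hFmonic : F.Monic := hmsub.mul hmadd
  have hFdeg : F.natDegree = 2 * n := by
    rw [hFdef, natDegree_mul hsub0 hadd0, natDegree_sub_C, natDegree_add_C, hpdeg]; ring
  have hFeq : (F.roots.map fun a => X - C a).prod = F :=
    prod_multiset_X_sub_C_of_monic_of_roots_card_eq hFmonic (by rw [hFcard, hFdeg])
  -- the finset Z of all 2n points
  set Z := F.roots.toFinset with hZdef
  have hZcard : Z.card = 2 * n := by
    rw [hZdef, Multiset.toFinset_card_eq_card_iff_nodup.mpr hFnodup, hFcard]
  have hZval : Z.val = F.roots := by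
    rw [hZdef, Multiset.toFinset_val, Multiset.dedup_eq_self.mpr hFnodup]
  have hZmem : ∀ t : ℝ, t ∈ Z ↔ (p.eval t = s ∨ p.eval t = -s) := by
    intro t
    rw [hZdef, Multiset.mem_toFinset, hFroots, Multiset.mem_add, mem_roots hsub0, mem_roots hadd0]
    simp only [IsRoot, eval_sub, eval_add, eval_C, sub_eq_zero]
    constructor
    · rintro (h|h)
      · exact Or.inl h
      · exact Or.inr (by linarith)
    · rintro (h|h)
      · exact Or.inl h
      · exact Or.inr (by linarith)
  -- evaluation of F as a product over Z
  have hFeval : ∀ t : ℝ, (p.eval t)^2 - s^2 = ∏ w ∈ Z, (t - w) := by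
    intro t
    have h1 : F.eval t = (p.eval t)^2 - s^2 := by
      rw [hFdef, eval_mul, eval_sub, eval_add, eval_C]; ring
    rw [← h1, ← hFeq, Finset.prod_eq_multiset_prod, hZval, eval_multiset_prod, Multiset.map_map]
    congr 1
    apply Multiset.map_congr rfl
    intro a _
    simp
  -- the sorted points
  set z := Z.orderEmbOfFin hZcard with hzdef
  have hzmem : ∀ i, (z i : ℝ) ∈ Z := fun i => Finset.orderEmbOfFin_mem Z hZcard i
  have hzsurj : ∀ t ∈ Z, ∃ i, z i = t := by
    intro t ht
    have : t ∈ Set.range z := by rw [hzdef, Finset.range_orderEmbOfFin]; exact ht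
    exact this
  have hzmono : StrictMono z := (z : Fin (2*n) ↪o ℝ).strictMono
  -- sign of F via parity of the number of points above t
  have hsign : ∀ t : ℝ, t ∉ Z → Odd (Z.filter (fun w => t < w)).card →
      (p.eval t)^2 < s^2 := by
    intro t htZ hodd
    have hsplit : ∏ w ∈ Z, (t - w) =
        (∏ w ∈ Z.filter (fun w => t < w), (t - w)) *
        ∏ w ∈ Z.filter (fun w => ¬ t < w), (t - w) :=
      (Finset.prod_filter_mul_prod_filter_not Z _ _).symm
    have hpos2 : 0 < ∏ w ∈ Z.filter (fun w => ¬ t < w), (t - w) := by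
      apply Finset.prod_pos
      intro w hw
      rw [Finset.mem_filter] at hw
      rcases lt_or_eq_of_le (not_lt.mp hw.2) with h | h
      · linarith
      · exact absurd (h ▸ hw.1) htZ
    have hneg : ∏ w ∈ Z.filter (fun w => t < w), (t - w) =
        (-1)^(Z.filter (fun w => t < w)).card * ∏ w ∈ Z.filter (fun w => t < w), (w - t) := by
      rw [← Finset.prod_const, ← Finset.prod_mul_distrib]
      apply Finset.prod_congr rfl
      intro w _
      ring
    have hpos1 : 0 < ∏ w ∈ Z.filter (fun w => t < w), (w - t) := by
      apply Finset.prod_pos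
      intro w hw
      rw [Finset.mem_filter] at hw
      linarith [hw.2]
    have : (p.eval t)^2 - s^2 < 0 := by
      rw [hFeval t, hsplit, hneg, Odd.neg_one_pow hodd]
      nlinarith
    linarith
  -- the count of points above t, for t between consecutive points
  have hcount : ∀ (i : Fin (2*n)) (hi : i.1 + 1 < 2*n) (t : ℝ),
      z i < t → t < z ⟨i.1 + 1, hi⟩ →
      t ∉ Z ∧ (Z.filter (fun w => t < w)).card = 2*n - 1 - i.1 := by
    intro i hi t ht1 ht2
    have htZ : t ∉ Z := by
      intro ht
      obtain ⟨k, hk⟩ := hzsurj t ht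
      rw [← hk] at ht1 ht2
      have h1 : i < k := hzmono.lt_iff_lt.mp ht1
      have h2 : k < (⟨i.1+1, hi⟩ : Fin (2*n)) := hzmono.lt_iff_lt.mp ht2
      rw [Fin.lt_def] at h1 h2
      simp at h1 h2
      omega
    refine ⟨htZ, ?_⟩
    have himg : Z = Finset.image z Finset.univ := by
      apply (Finset.eq_of_subset_of_card_le ?_ ?_).symm
      · intro w hw
        rw [Finset.mem_image] at hw
        obtain ⟨k, _, rfl⟩ := hw
        exact hzmem k
      · rw [Finset.card_image_of_injective _ hzmono.injective, Finset.card_univ,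
          Fintype.card_fin, hZcard]
    rw [himg, Finset.filter_image, Finset.card_image_of_injective _ hzmono.injective]
    have hfe : Finset.filter (fun k => t < z k) Finset.univ = Finset.Ioi i := by
      ext k
      rw [Finset.mem_filter, Finset.mem_Ioi]
      constructor
      · rintro ⟨-, hk⟩
        by_contra hki
        rw [not_lt] at hki
        have : (z k : ℝ) ≤ z i := hzmono.monotone hki
        linarith
      · intro hik
        refine ⟨Finset.mem_univ _, ?_⟩
        have : (⟨i.1+1, hi⟩ : Fin (2*n)) ≤ k := by
          rw [Fin.le_def]; rw [Fin.lt_def] at hik; exact hik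
        have := hzmono.monotone this
        linarith
    rw [hfe, Fin.card_Ioi]
  -- the target polynomial q = p + cθ
  have hq_monic : (p + C cθ).Monic := hmono.add_of_left (hCdeg _)
  have hq0 : p + C cθ ≠ 0 := hq_monic.ne_zero
  have hqdeg : (p + C cθ).natDegree = n := by rw [natDegree_add_C, hpdeg]
  -- in each of the n intervals there is a root of q
  have main : ∀ i : Fin n, ∃ t, z ⟨2*i.1, by have := i.2; omega⟩ < t ∧
      t < z ⟨2*i.1+1, by have := i.2; omega⟩ ∧ (p + C cθ).eval t = 0 := by
    intro i
    have hi2 := i.2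
    set i0 : Fin (2*n) := ⟨2*i.1, by omega⟩ with hi0
    set i1 : Fin (2*n) := ⟨2*i.1+1, by omega⟩ with hi1
    have hzlt : z i0 < z i1 := hzmono (by simp [hi0, hi1, Fin.lt_def])
    have h01 : i0.1 + 1 < 2*n := by simp [hi0]; omega
    have hIoo : ∀ t, z i0 < t → t < z i1 → (p.eval t)^2 < s^2 := by
      intro t ht1 ht2
      obtain ⟨htZ, hcnt⟩ := hcount i0 h01 t ht1 ht2
      apply hsign t htZ
      rw [hcnt, Nat.odd_iff]
      simp [hi0]
      omega
    have hv0 : p.eval (z i0) = s ∨ p.eval (z i0) = -s := (hZmem _).mp (hzmem i0)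
    have hv1 : p.eval (z i1) = s ∨ p.eval (z i1) = -s := (hZmem _).mp (hzmem i1)
    have hns : ¬(p.eval (z i0) = s ∧ p.eval (z i1) = s) := by
      rintro ⟨ha, hb⟩
      have h2n : 2 ≤ n := by
        by_contra hh
        have e0 : z i0 ∈ (p - C s).roots.toFinset := (hAmem _).mpr ha
        have e1 : z i1 ∈ (p - C s).roots.toFinset := (hAmem _).mpr hb
        have hAcard : (p - C s).roots.toFinset.card = 1 := by
          rw [Multiset.toFinset_card_eq_card_iff_nodup.mpr hminus.2, hminus.1]; omega
        have := Finset.card_le_one.mp (le_of_eq hAcard) _ e0 _ e1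
        rw [this] at hzlt
        exact lt_irrefl _ hzlt
      exact no_double p s hs0 n h2n hpdeg hplus.1 hplus.2 _ _ hzlt ha hb hIoo
    have hnm : ¬(p.eval (z i0) = -s ∧ p.eval (z i1) = -s) := by
      rintro ⟨ha, hb⟩
      have h2n : 2 ≤ n := by
        by_contra hh
        have e0 : z i0 ∈ (p + C s).roots.toFinset := (hBmem _).mpr ha
        have e1 : z i1 ∈ (p + C s).roots.toFinset := (hBmem _).mpr hb
        have hBcard : (p + C s).roots.toFinset.card = 1 := by
          rw [Multiset.toFinset_card_eq_card_iff_nodup.mpr hplus.2, hplus.1]; omega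
        have := Finset.card_le_one.mp (le_of_eq hBcard) _ e0 _ e1
        rw [this] at hzlt
        exact lt_irrefl _ hzlt
      have hnp : -p + C s = -(p - C s) := by ring
      apply no_double (-p) s hs0 n h2n (by rw [natDegree_neg, hpdeg])
        (by rw [hnp, roots_neg]; exact hminus.1)
        (by rw [hnp, roots_neg]; exact hminus.2)
        _ _ hzlt (by rw [eval_neg, ha]; ring) (by rw [eval_neg, hb]; ring)
      intro t ht1 ht2
      rw [eval_neg, neg_sq]
      exact hIoo t ht1 ht2
    have hqcont : ContinuousOn (fun t => (p + C cθ).eval t) (Icc (z i0) (z i1)) :=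
      (p + C cθ).continuousOn
    rcases hv0 with ha | ha <;> rcases hv1 with hb | hb
    · exact absurd ⟨ha, hb⟩ hns
    · have h0 : (0:ℝ) ∈ Ioo ((p + C cθ).eval (z i1)) ((p + C cθ).eval (z i0)) := by
        simp only [eval_add, eval_C, ha, hb, Set.mem_Ioo]
        constructor <;> linarith
      obtain ⟨t, htI, ht0⟩ := intermediate_value_Ioo' (le_of_lt hzlt) hqcont h0
      exact ⟨t, htI.1, htI.2, ht0⟩
    · have h0 : (0:ℝ) ∈ Ioo ((p + C cθ).eval (z i0)) ((p + C cθ).eval (z i1)) := by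
        simp only [eval_add, eval_C, ha, hb, Set.mem_Ioo]
        constructor <;> linarith
      obtain ⟨t, htI, ht0⟩ := intermediate_value_Ioo (le_of_lt hzlt) hqcont h0
      exact ⟨t, htI.1, htI.2, ht0⟩
    · exact absurd ⟨ha, hb⟩ hnm
  choose w hw1 hw2 hw3 using main
  have hwmono : StrictMono w := by
    intro i j hij
    have hj2 := j.2
    have hi2 := i.2
    have h1 : w i < z ⟨2*i.1+1, by omega⟩ := hw2 i
    have h2 : z ⟨2*i.1+1, by omega⟩ ≤ z ⟨2*j.1, by omega⟩ := by
      apply hzmono.monotone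
      rw [Fin.le_def]
      simp
      rw [Fin.lt_def] at hij
      omega
    have h3 : z ⟨2*j.1, by omega⟩ < w j := hw1 j
    linarith
  have hsub : Finset.image w Finset.univ ⊆ (p + C cθ).roots.toFinset := by
    intro t ht
    rw [Finset.mem_image] at ht
    obtain ⟨i, -, rfl⟩ := ht
    rw [Multiset.mem_toFinset, mem_roots hq0]
    exact hw3 i
  have hcard1 : n ≤ (p + C cθ).roots.toFinset.card := by
    calc n = (Finset.image w Finset.univ).card := by
          rw [Finset.card_image_of_injective _ hwmono.injective, Finset.card_univ,
            Fintype.card_fin]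
      _ ≤ _ := Finset.card_le_card hsub
  have hcard2 : (p + C cθ).roots.toFinset.card ≤ Multiset.card (p + C cθ).roots :=
    Multiset.toFinset_card_le _
  have hcard3 : Multiset.card (p + C cθ).roots ≤ n := by
    rw [← hqdeg]; exact card_roots' _
  have hcardeq : Multiset.card (p + C cθ).roots = n := by omega
  refine ⟨hcardeq, ?_⟩
  rw [← Multiset.toFinset_card_eq_card_iff_nodup]
  omega
end

section
/- Let f(t,u,v) = t^n + Σ_{r=1}^{⌊n/2⌋} c_r t^{n−2r}(uv)^r with n odd and real coefficients c_r, and suppose ∂f/∂t(t, e^{iθ}, e^{−iθ}) has all real roots in t for every θ. Then ∂f/∂t factors as a product over j = 1,...,(n−1)/2 of quadrics t² − s_j·uv with s_j ∈ ℝ_{≥0}. -/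
open MvPolynomial Complex

set_option maxHeartbeats 1000000 in
set_option synthInstance.maxHeartbeats 400000 in
/-- For odd `n` and `f = tⁿ + Σ c_r t^{n−2r}(uv)^r`, if `∂f/∂t(·, e^{iθ}, e^{−iθ})` has
all real roots for every `θ`, then `∂f/∂t = n·Π_{j=1}^{(n−1)/2} (t² − s_j·uv)` with
`s_j ∈ ℝ_{≥0}`. -/
theorem stmt13 (n : ℕ) (hn : Odd n) (c : ℕ → ℝ)
    (f : MvPolynomial (Fin 3) ℂ)
    (hf : f = X 0 ^ n
      + ∑ r ∈ Finset.Icc 1 (n / 2), C ((c r : ℂ)) * X 0 ^ (n - 2 * r) * (X 1 * X 2) ^ r)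
    (hhyp : ∀ θ : ℝ, ∀ z : ℂ,
      MvPolynomial.aeval ![z, Complex.exp (θ * Complex.I), Complex.exp (-θ * Complex.I)]
          (MvPolynomial.pderiv (0 : Fin 3) f) = 0 → z.im = 0) :
    ∃ s : Fin ((n - 1) / 2) → ℝ, (∀ j, 0 ≤ s j) ∧
      MvPolynomial.pderiv (0 : Fin 3) f =
        C (n : ℂ) * ∏ j : Fin ((n - 1) / 2), (X 0 ^ 2 - C ((s j : ℂ)) * X 1 * X 2) := by
  classical
  obtain ⟨m, hm'⟩ := hn
  have hm : n = 2 * m + 1 := by omega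
  rw [show (n - 1) / 2 = m by omega]
  set D : MvPolynomial (Fin 3) ℂ := MvPolynomial.pderiv (0 : Fin 3) f with hDdef
  set a : ℕ → ℂ := fun r => (((n - 2 * r : ℕ) : ℂ) * (c r : ℂ)) with ha
  -- Step A : compute the derivative explicitly
  have hD : D = MvPolynomial.C (n : ℂ) * X 0 ^ (2 * m)
      + ∑ r ∈ Finset.Icc 1 m, MvPolynomial.C (a r) * X 0 ^ (2 * (m - r)) * (X 1 * X 2) ^ r := by
    have h2 : n / 2 = m := by omega
    rw [hDdef, hf, map_add, map_sum, h2]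
    congr 1
    · rw [pderiv_pow, pderiv_X_self, mul_one]
      have h1 : n - 1 = 2 * m := by omega
      rw [h1]
      simp [MvPolynomial.C_eq_coe_nat]
    · refine Finset.sum_congr rfl fun r hr => ?_
      simp only [Finset.mem_Icc] at hr
      rw [pderiv_mul, pderiv_mul, pderiv_C, zero_mul, zero_add, pderiv_pow, pderiv_X_self,
        mul_one, pderiv_pow, pderiv_mul, pderiv_X_of_ne (by decide),
        pderiv_X_of_ne (by decide), zero_mul, mul_zero, add_zero, mul_zero, mul_zero, add_zero]
      have h3 : n - 2 * r - 1 = 2 * (m - r) := by omega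
      rw [h3, map_mul, MvPolynomial.C_eq_coe_nat]
      ring
  -- Step B : the univariate polynomial g
  set g : Polynomial ℂ := Polynomial.C (n : ℂ) * Polynomial.X ^ m
      + ∑ r ∈ Finset.Icc 1 m, Polynomial.C (a r) * Polynomial.X ^ (m - r) with hg
  have hn0 : (n : ℂ) ≠ 0 := Nat.cast_ne_zero.mpr (by omega)
  have hcoeff : g.coeff m = n := by
    rw [hg, Polynomial.coeff_add, Polynomial.coeff_C_mul, Polynomial.coeff_X_pow, if_pos rfl,
      Polynomial.finset_sum_coeff]
    rw [Finset.sum_eq_zero, add_zero, mul_one]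
    intro r hr
    simp only [Finset.mem_Icc] at hr
    rw [Polynomial.coeff_C_mul, Polynomial.coeff_X_pow, if_neg (by omega), mul_zero]
  have hdegle : g.natDegree ≤ m := by
    refine Polynomial.natDegree_add_le_of_degree_le ?_ ?_
    · exact (Polynomial.natDegree_C_mul_le _ _).trans (by simp)
    · refine Polynomial.natDegree_sum_le_of_forall_le _ _ fun r hr => ?_
      exact (Polynomial.natDegree_C_mul_le _ _).trans
        (by simp only [Polynomial.natDegree_X_pow]; omega)
  have hdeg : g.natDegree = m :=
    le_antisymm hdegle (Polynomial.le_natDegree_of_ne_zero (by rw [hcoeff]; exact hn0))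
  have hg0 : g ≠ 0 := fun h => hn0 (by rw [← hcoeff, h, Polynomial.coeff_zero])
  have hlead : g.leadingCoeff = n := by rw [Polynomial.leadingCoeff, hdeg, hcoeff]
  have hsplit : g.Splits := IsAlgClosed.splits g
  have hcard : g.roots.card = m := by
    rw [Polynomial.splits_iff_card_roots.mp hsplit, hdeg]
  have hfact : g = Polynomial.C (n : ℂ) *
      (g.roots.map fun z => Polynomial.X - Polynomial.C z).prod := by
    have h := hsplit.eq_prod_roots
    rwa [hlead] at h
  -- Step C : evaluation of D at (w, 1, 1) is g.eval (w^2)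
  have heval : ∀ wz : ℂ, (MvPolynomial.aeval ![wz, 1, 1]) D = g.eval (wz ^ 2) := by
    intro wz
    rw [hD, hg]
    simp only [map_add, map_mul, map_pow, map_sum, MvPolynomial.aeval_C, MvPolynomial.aeval_X,
      Polynomial.eval_add, Polynomial.eval_mul, Polynomial.eval_pow, Polynomial.eval_C,
      Polynomial.eval_X, Polynomial.eval_finset_sum, Matrix.cons_val_zero, Matrix.cons_val_one,
      Matrix.head_cons, one_mul, mul_one, one_pow]
    rw [← pow_mul]
    congr 1
    refine Finset.sum_congr rfl fun r hr => ?_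
    rw [← pow_mul]
    simp [Matrix.cons_val_succ]
  -- Step D : all roots of g are real and nonnegative
  have hreal : ∀ z ∈ g.roots, z = ((z.re : ℝ) : ℂ) ∧ 0 ≤ z.re := by
    intro z hz
    have hzr : g.eval z = 0 := (Polynomial.mem_roots hg0).mp hz
    obtain ⟨wz, hwz⟩ := IsAlgClosed.exists_pow_nat_eq z (n := 2) (by norm_num)
    have him : wz.im = 0 := by
      apply hhyp 0 wz
      have h0 : Complex.exp ((0 : ℝ) * Complex.I) = 1 := by simp
      have h0' : Complex.exp (-(0 : ℝ) * Complex.I) = 1 := by simp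
      rw [show (![wz, Complex.exp ((0 : ℝ) * Complex.I), Complex.exp (-(0 : ℝ) * Complex.I)])
          = ![wz, 1, 1] by rw [h0, h0'], heval wz, hwz, hzr]
    have hwzre : wz = ((wz.re : ℝ) : ℂ) := Complex.ext rfl (by simp [him])
    have hz2 : z = ((wz.re ^ 2 : ℝ) : ℂ) := by
      rw [← hwz]
      conv_lhs => rw [hwzre]
      push_cast
      ring
    constructor
    · rw [hz2, Complex.ofReal_re]
    · rw [hz2, Complex.ofReal_re]; positivity
  -- Step E : construct s from the roots
  set l : List ℝ := (g.roots.map Complex.re).toList with hl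
  have hlen : m = l.length := by
    rw [hl, Multiset.length_toList, Multiset.card_map, hcard]
  refine ⟨fun j => l.get (Fin.cast hlen j), fun j => ?_, ?_⟩
  · simp only
    have hmem : l.get (Fin.cast hlen j) ∈ (g.roots.map Complex.re) := by
      rw [← Multiset.mem_toList]; exact l.get_mem (Fin.cast hlen j)
    obtain ⟨z, hz, hz2⟩ := Multiset.mem_map.mp hmem
    rw [← hz2]; exact (hreal z hz).2
  set s : Fin m → ℝ := fun j => l.get (Fin.cast hlen j) with hs
  have hconv : ∀ (β : Type) [CommMonoid β] (F : ℝ → β),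
      ∏ j : Fin m, F (s j) = ((g.roots.map Complex.re).map F).prod := by
    intro β _ F
    rw [hs]
    simp only
    rw [Fin.prod_congr' (fun i => F (l.get i)) hlen]
    have h1 : ∏ i : Fin l.length, F (l.get i) = (l.map F).prod := by
      simpa using Fin.prod_univ_get' l F
    rw [h1, ← Multiset.prod_coe, ← Multiset.map_coe, Multiset.coe_toList]
  -- Step F : transfer to the fraction field
  set φ : MvPolynomial (Fin 3) ℂ →+* FractionRing (MvPolynomial (Fin 3) ℂ) :=
    (algebraMap (MvPolynomial (Fin 3) ℂ) (FractionRing (MvPolynomial (Fin 3) ℂ))) with hφ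
  have hinj : Function.Injective φ := IsFractionRing.injective _ _
  apply hinj
  set E : ℂ →+* FractionRing (MvPolynomial (Fin 3) ℂ) := φ.comp (MvPolynomial.C) with hE
  set t := φ (X 0) with ht
  set w := φ (X 1 * X 2) with hwdef
  have hw : w ≠ 0 := by
    rw [hwdef, map_ne_zero_iff φ hinj]
    exact mul_ne_zero (MvPolynomial.X_ne_zero 1) (MvPolynomial.X_ne_zero 2)
  set k := t ^ 2 * w⁻¹ with hk
  have hkey : ∀ j : ℕ, j ≤ m → k ^ j * w ^ m = t ^ (2 * j) * w ^ (m - j) := by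
    intro j hj
    have h1 : w ^ m = w ^ j * w ^ (m - j) := by rw [← pow_add]; congr 1; omega
    rw [hk, mul_pow, h1, pow_mul, mul_assoc, ← mul_assoc (w⁻¹ ^ j), inv_pow,
      inv_mul_cancel₀ (pow_ne_zero _ hw), one_mul]
  have hC : ∀ x : ℂ, φ (MvPolynomial.C x) = E x := fun _ => rfl
  have step1 : φ D = Polynomial.eval₂ E k g * w ^ m := by
    rw [hD, hg, Polynomial.eval₂_add, Polynomial.eval₂_mul, Polynomial.eval₂_C,
      Polynomial.eval₂_pow, Polynomial.eval₂_X, Polynomial.eval₂_finset_sum]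
    rw [map_add φ, map_mul φ, map_pow φ, map_sum φ, add_mul, Finset.sum_mul]
    congr 1
    · rw [mul_assoc, hkey m le_rfl, Nat.sub_self, pow_zero, mul_one]
      rfl
    · refine Finset.sum_congr rfl fun r hr => ?_
      simp only [Finset.mem_Icc] at hr
      rw [Polynomial.eval₂_mul, Polynomial.eval₂_C, Polynomial.eval₂_pow, Polynomial.eval₂_X,
        map_mul φ, map_mul φ, map_pow φ, map_pow φ, mul_assoc (E (a r)),
        hkey (m - r) (by omega)]
      have h2 : m - (m - r) = r := by omega
      rw [h2, hC (a r)]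
      ring
  have step2 : Polynomial.eval₂ E k g
      = E (n : ℂ) * (g.roots.map (fun z => k - E ((z.re : ℝ) : ℂ))).prod := by
    conv_lhs => rw [hfact]
    rw [Polynomial.eval₂_mul, Polynomial.eval₂_C]
    congr 1
    rw [show Polynomial.eval₂ E k = ⇑(Polynomial.eval₂RingHom E k) from rfl,
      map_multiset_prod, Multiset.map_map]
    refine congrArg Multiset.prod (Multiset.map_congr rfl fun z hz => ?_)
    simp only [Function.comp_apply, Polynomial.coe_eval₂RingHom, Polynomial.eval₂_sub,
      Polynomial.eval₂_X, Polynomial.eval₂_C]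
    rw [← (hreal z hz).1]
  rw [step1, step2]
  have hprod : ∀ (F : ℝ → FractionRing (MvPolynomial (Fin 3) ℂ)),
      (g.roots.map (fun z => F z.re)).prod = ∏ j : Fin m, F (s j) := by
    intro F
    rw [hconv _ F, Multiset.map_map]
    rfl
  rw [hprod (fun x => k - E ((x : ℝ) : ℂ))]
  rw [map_mul, map_prod]
  rw [hC]
  have hterm : ∀ j : Fin m,
      φ (X 0 ^ 2 - MvPolynomial.C ((s j : ℝ) : ℂ) * X 1 * X 2)
        = (k - E ((s j : ℝ) : ℂ)) * w := by
    intro j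
    have hk2 : k * w = t ^ 2 := by
      rw [hk, mul_assoc, inv_mul_cancel₀ hw, mul_one]
    rw [map_sub φ, map_pow φ, sub_mul, hk2, ← ht]
    congr 1
    rw [hwdef, map_mul φ, map_mul φ, map_mul φ, hC]
    ring
  rw [Finset.prod_congr rfl (fun j _ => hterm j), ← Finset.prod_mul_pow_card,
    Finset.card_univ, Fintype.card_fin, mul_assoc]
end

section
/- Let n be odd and f(t,u,v) = t^n + Σ_{r=1}^{⌊n/2⌋} c_r t^{n−2r}(uv)^r + c_0(u^n+v^n)/2 + c̃_0(u^n−v^n)/(2i) with (c_0, c̃_0) ≠ (0,0). Then there is no common zero of f and ∂f/∂t in ℙ²(ℂ) with t = 0. -/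
open Polynomial in
lemma key14 (s : Multiset ℝ) (hs : ∀ r ∈ s, r ≠ 0) :
    ((s.map (fun r => X - C r)).prod).coeff 1 ^ 2
      - 2 * ((s.map (fun r => X - C r)).prod).coeff 2 * ((s.map (fun r => X - C r)).prod).coeff 0
    = (s.map (fun r => (r⁻¹) ^ 2)).sum * ((s.map (fun r => X - C r)).prod).coeff 0 ^ 2 := by
  induction s using Multiset.induction with
  | empty => simp [Polynomial.coeff_one]
  | cons a s ih =>
    have ha : a ≠ 0 := hs a (Multiset.mem_cons_self a s)
    have ih' := ih (fun r hr => hs r (Multiset.mem_cons_of_mem hr))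
    set q := ((s.map (fun r => X - C r)).prod) with hq
    have hc : ∀ k, (((a ::ₘ s).map (fun r => X - C r)).prod).coeff (k+1)
        = q.coeff k - a * q.coeff (k+1) := by
      intro k
      simp only [Multiset.map_cons, Multiset.prod_cons, sub_mul, coeff_sub, coeff_X_mul,
        coeff_C_mul, ← hq]
    have hc0 : (((a ::ₘ s).map (fun r => X - C r)).prod).coeff 0 = - a * q.coeff 0 := by
      simp [Multiset.map_cons, Multiset.prod_cons, sub_mul, mul_coeff_zero, ← hq]
    have h1 := hc 0
    have h2 := hc 1
    rw [show (0+1 : ℕ) = 1 by rfl] at h1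
    rw [show (1+1 : ℕ) = 2 by rfl] at h2
    rw [h1, h2, hc0]
    simp only [Multiset.map_cons, Multiset.sum_cons]
    have haa : a⁻¹ ^ 2 * a ^ 2 = 1 := by field_simp
    linear_combination a ^ 2 * ih' - q.coeff 0 ^ 2 * haa

open Polynomial in
lemma aux14 (n m : ℕ) (hm : n = 2*m+1) (hm0 : m ≠ 0) (c : ℕ → ℝ) (g : ℝ)
    (hg : g ≠ 0) (hcm : c m = 0)
    (hroots : ∀ z : ℂ, z^n + ∑ r ∈ Finset.Icc 1 m, (c r : ℂ) * z^(n-2*r) + (g:ℂ) = 0 →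
      z.im = 0) : False := by
  subst hm
  set Q : ℝ[X] := X^(2*m+1) + (∑ r ∈ Finset.Icc 1 m, C (c r) * X^(2*m+1-2*r) + C g) with hQ
  have hEdeg : (∑ r ∈ Finset.Icc 1 m, C (c r) * X^(2*m+1-2*r) + C g).degree
      ≤ ((2*m : ℕ) : WithBot ℕ) := by
    apply le_trans (degree_add_le _ _)
    apply max_le
    · apply le_trans (degree_sum_le _ _)
      apply Finset.sup_le
      intro r hr
      apply le_trans (degree_C_mul_X_pow_le _ _)
      have h1 := (Finset.mem_Icc.mp hr).1
      exact Nat.cast_le.mpr (by omega)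
    · exact le_trans degree_C_le (by exact_mod_cast Nat.zero_le (2*m))
  have hEdeg' : (∑ r ∈ Finset.Icc 1 m, C (c r) * X^(2*m+1-2*r) + C g).degree
      < ((2*m+1 : ℕ) : WithBot ℕ) := lt_of_le_of_lt hEdeg (Nat.cast_lt.mpr (by omega))
  have hQmonic : Q.Monic := monic_X_pow_add hEdeg'
  have hQdeg : Q.degree = ((2*m+1 : ℕ) : WithBot ℕ) := by
    rw [hQ, degree_add_eq_left_of_degree_lt, degree_X_pow]
    rw [degree_X_pow]
    exact hEdeg'
  -- coefficients of Q
  have hQ0 : Q.coeff 0 = g := by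
    rw [hQ]
    simp only [coeff_add, coeff_X_pow, coeff_C, finset_sum_coeff, coeff_C_mul]
    have hsz : ∀ r ∈ Finset.Icc 1 m,
        (c r) * (if (0:ℕ) = 2*m+1-2*r then (1:ℝ) else 0) = 0 := by
      intro r hr
      have h1 := (Finset.mem_Icc.mp hr).1
      have h2 := (Finset.mem_Icc.mp hr).2
      rw [if_neg (by omega), mul_zero]
    rw [Finset.sum_congr rfl hsz, Finset.sum_const_zero]
    simp
  have hQ1 : Q.coeff 1 = 0 := by
    rw [hQ]
    simp only [coeff_add, coeff_X_pow, coeff_C, finset_sum_coeff, coeff_C_mul]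
    rw [Finset.sum_eq_single m]
    · simp [hcm, hm0, show 2*m+1-2*m = 1 from by omega, show ¬((1:ℕ) = 2*m+1) from by omega]
    · intro r hr hrm
      have h1 := (Finset.mem_Icc.mp hr).1
      have h2 := (Finset.mem_Icc.mp hr).2
      rw [if_neg (by omega), mul_zero]
    · intro h
      exact absurd (Finset.mem_Icc.mpr ⟨by omega, le_refl m⟩) h
  have hQ2 : Q.coeff 2 = 0 := by
    rw [hQ]
    simp only [coeff_add, coeff_X_pow, coeff_C, finset_sum_coeff, coeff_C_mul]
    have hsz : ∀ r ∈ Finset.Icc 1 m,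
        (c r) * (if (2:ℕ) = 2*m+1-2*r then (1:ℝ) else 0) = 0 := by
      intro r hr
      have h1 := (Finset.mem_Icc.mp hr).1
      have h2 := (Finset.mem_Icc.mp hr).2
      rw [if_neg (by omega), mul_zero]
    rw [Finset.sum_congr rfl hsz, Finset.sum_const_zero]
    simp [show ¬((2:ℕ) = 2*m+1) from by omega]
  -- the complex polynomial
  set P : ℂ[X] := Q.map (algebraMap ℝ ℂ) with hP
  have hPmonic : P.Monic := hQmonic.map _
  have hPeval : ∀ z : ℂ, P.eval z
      = z^(2*m+1) + ∑ r ∈ Finset.Icc 1 m, (c r : ℂ) * z^(2*m+1-2*r) + (g:ℂ) := by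
    intro z
    rw [hP, hQ]
    simp only [Polynomial.map_add, Polynomial.map_pow, Polynomial.map_X, Polynomial.map_sum,
      Polynomial.map_mul, Polynomial.map_C, eval_add, eval_pow, eval_X, eval_C, eval_finset_sum,
      eval_mul]
    norm_num [Complex.coe_algebraMap]
    ring
  have hsplits : P.Splits := IsAlgClosed.splits P
  have hfact : P = (P.roots.map (fun a => X - C a)).prod :=
    hsplits.eq_prod_roots_of_monic hPmonic
  have hrre : ∀ z ∈ P.roots, z.im = 0 := by
    intro z hz
    have hz0 : P.eval z = 0 := (mem_roots (hPmonic.ne_zero)).mp hz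
    rw [hPeval] at hz0
    exact hroots z hz0
  set s : Multiset ℝ := P.roots.map Complex.re with hs
  have hmapeq : Multiset.map (fun r : ℝ => (r:ℂ)) s = P.roots := by
    rw [hs, Multiset.map_map]
    calc Multiset.map ((fun r : ℝ => (r:ℂ)) ∘ Complex.re) P.roots
        = Multiset.map id P.roots := by
          apply Multiset.map_congr rfl
          intro z hz
          have := hrre z hz
          simp only [Function.comp_apply, id_eq]
          exact Complex.ext (by simp) (by simp [this])
      _ = P.roots := Multiset.map_id _
  -- Q equals the real product
  have hQfact : Q = (s.map (fun r : ℝ => X - C r)).prod := by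
    apply Polynomial.map_injective (algebraMap ℝ ℂ)
      (fun x y h => by exact_mod_cast h)
    rw [← hP, hfact, ← hmapeq, Polynomial.map_multiset_prod]
    simp only [Multiset.map_map]
    apply congrArg Multiset.prod
    apply Multiset.map_congr rfl
    intro z _
    simp [Polynomial.map_sub, Complex.coe_algebraMap]
  -- nonzero roots
  have hsne : ∀ r ∈ s, r ≠ 0 := by
    intro r hr hr0
    have hdvd : (X - C r) ∣ (s.map (fun r : ℝ => X - C r)).prod :=
      Multiset.dvd_prod (Multiset.mem_map_of_mem _ hr)
    rw [← hQfact] at hdvd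
    obtain ⟨q, hq⟩ := hdvd
    have : Q.coeff 0 = 0 := by
      rw [hq, mul_coeff_zero, coeff_sub, coeff_X_zero, coeff_C_zero, hr0]
      ring
    exact hg (by rw [← hQ0, this])
  -- cardinality
  have hcard : Multiset.card s = 2*m+1 := by
    rw [hs, Multiset.card_map]
    have h1 := hsplits.natDegree_eq_card_roots
    rw [← h1]
    have h2 : P.natDegree = Q.natDegree := hQmonic.natDegree_map _
    rw [h2, natDegree_eq_of_degree_eq_some hQdeg]
  have hs0 : s ≠ 0 := by
    intro h
    rw [h] at hcard
    simp at hcard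
  -- apply key lemma
  have hkey := key14 s hsne
  rw [← hQfact, hQ1, hQ2, hQ0] at hkey
  have hsumpos : 0 < (s.map (fun r => (r⁻¹)^2)).sum := by
    obtain ⟨r, hr⟩ := Multiset.exists_mem_of_ne_zero hs0
    have hle : (r⁻¹)^2 ≤ (s.map (fun r => (r⁻¹)^2)).sum :=
      Multiset.single_le_sum (fun x hx => by
        obtain ⟨y, hy, rfl⟩ := Multiset.mem_map.mp hx
        positivity) _ (Multiset.mem_map_of_mem _ hr)
    have hpos : (0:ℝ) < (r⁻¹)^2 := by
      have := hsne r hr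
      positivity
    linarith
  nlinarith [hsumpos, mul_pos hsumpos (by positivity : (0:ℝ) < g^2)]

open MvPolynomial Complex

/-- For odd `n` and hyperbolic `f` in normal form with `(c₀, c̃₀) ≠ (0,0)`, every common
projective zero of `f` and `∂f/∂t` has `t ≠ 0`. -/
theorem stmt14 (n : ℕ) (hn : Odd n) (c : ℕ → ℝ) (c0 ctil : ℝ)
    (hne : (c0, ctil) ≠ (0, 0))
    (f : MvPolynomial (Fin 3) ℂ)
    (hf : f = X 0 ^ n
      + ∑ r ∈ Finset.Icc 1 (n / 2), C ((c r : ℂ)) * X 0 ^ (n - 2 * r) * (X 1 * X 2) ^ r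
      + C ((c0 : ℂ) / 2) * (X 1 ^ n + X 2 ^ n)
      + C ((ctil : ℂ) / (2 * Complex.I)) * (X 1 ^ n - X 2 ^ n))
    (hhyp : ∀ θ : ℝ, ∀ z : ℂ,
      MvPolynomial.aeval ![z, Complex.exp (θ * Complex.I), Complex.exp (-θ * Complex.I)] f = 0 →
        z.im = 0) :
    ∀ u v : ℂ, (u, v) ≠ (0, 0) →
      ¬ (MvPolynomial.aeval ![(0 : ℂ), u, v] f = 0 ∧
          MvPolynomial.aeval ![(0 : ℂ), u, v] (MvPolynomial.pderiv (0 : Fin 3) f) = 0) := by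
  intro u v huv
  rintro ⟨h0, h1⟩
  obtain ⟨m, hm⟩ := hn
  have hm2 : n / 2 = m := by omega
  have hn0 : n ≠ 0 := by omega
  -- eval of f at (0,u,v)
  have hE : ∀ u v : ℂ, MvPolynomial.aeval ![(0:ℂ), u, v] f
      = ((c0:ℂ)/2 + (ctil:ℂ)/(2*Complex.I)) * u^n + ((c0:ℂ)/2 - (ctil:ℂ)/(2*Complex.I)) * v^n := by
    intro u v
    rw [hf]
    simp only [map_add, map_mul, map_pow, map_sub, map_sum, aeval_X, aeval_C,
      Matrix.cons_val_zero, Matrix.cons_val_one, Matrix.head_cons, Matrix.cons_val_two, Matrix.tail_cons, Algebra.algebraMap_self_apply]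
    rw [zero_pow hn0, Finset.sum_eq_zero]
    · ring
    · intro r hr
      have : n - 2*r ≠ 0 := by
        have := (Finset.mem_Icc.mp hr).2
        omega
      rw [zero_pow this]
      ring
  -- a, b nonzero
  have ha : ((c0:ℂ)/2 + (ctil:ℂ)/(2*Complex.I)) ≠ 0 := by
    intro h
    have h2 : (ctil:ℂ) + (c0:ℂ) * Complex.I = 0 := by
      have hI := Complex.I_ne_zero
      field_simp at h
      linear_combination h
    have hre := congrArg Complex.re h2
    have him := congrArg Complex.im h2
    simp at hre him
    exact hne (by simp [Prod.ext_iff, hre, him])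
  have hb : ((c0:ℂ)/2 - (ctil:ℂ)/(2*Complex.I)) ≠ 0 := by
    intro h
    have h2 : (ctil:ℂ) - (c0:ℂ) * Complex.I = 0 := by
      have hI := Complex.I_ne_zero
      field_simp at h
      linear_combination (-1 : ℂ) * h
    have hre := congrArg Complex.re h2
    have him := congrArg Complex.im h2
    simp at hre him
    exact hne (by simp [Prod.ext_iff, hre, him])
  have hD : ∀ u v : ℂ, m ≠ 0 → MvPolynomial.aeval ![(0:ℂ), u, v] (MvPolynomial.pderiv (0 : Fin 3) f) = (c m : ℂ) * (u*v)^m := by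
    intro u v hm0
    rw [hf]
    simp only [map_add, map_sum, map_sub, pderiv_mul, pderiv_pow, pderiv_C,
      pderiv_X_self, pderiv_X_of_ne (by decide : (1:Fin 3) ≠ (0:Fin 3)),
      pderiv_X_of_ne (by decide : (2:Fin 3) ≠ (0:Fin 3)), mul_zero, zero_mul,
      add_zero, zero_add, mul_one, sub_self, sub_zero]
    simp only [map_add, map_sum, map_mul, map_pow, aeval_X, aeval_C,
      Matrix.cons_val_zero, Matrix.cons_val_one, Matrix.head_cons, Matrix.cons_val_two,
      Matrix.tail_cons, Algebra.algebraMap_self_apply, map_natCast, map_zero]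
    rw [zero_pow (by omega : n - 1 ≠ 0), mul_zero]
    simp only [map_zero, mul_zero, add_zero, zero_add, zero_mul]
    rw [hm2, Finset.sum_eq_single m]
    · rw [show n - 2*m - 1 = 0 by omega, pow_zero, show n - 2*m = 1 by omega]
      push_cast
      ring
    · intro r hr hrm
      have h1 := (Finset.mem_Icc.mp hr).1
      have h2 := (Finset.mem_Icc.mp hr).2
      rw [zero_pow (by omega : n - 2*r - 1 ≠ 0)]
      ring
    · intro hm'
      exfalso
      exact hm' (Finset.mem_Icc.mpr ⟨by omega, by omega⟩)
  have hP : ∀ θ : ℝ, ∀ z : ℂ,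
      MvPolynomial.aeval ![z, Complex.exp (θ * Complex.I), Complex.exp (-θ * Complex.I)] f
      = z^n + ∑ r ∈ Finset.Icc 1 m, (c r : ℂ) * z^(n-2*r)
          + ((c0 * Real.cos (n*θ) + ctil * Real.sin (n*θ) : ℝ) : ℂ) := by
    intro θ z
    rw [hf]
    simp only [map_add, map_sum, map_mul, map_pow, map_sub, aeval_X, aeval_C,
      Matrix.cons_val_zero, Matrix.cons_val_one, Matrix.head_cons, Matrix.cons_val_two,
      Matrix.tail_cons, Algebra.algebraMap_self_apply]
    have hprod : Complex.exp (↑θ * Complex.I) * Complex.exp (-↑θ * Complex.I) = 1 := by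
      rw [← Complex.exp_add, show (↑θ * Complex.I + -↑θ * Complex.I) = 0 by ring,
        Complex.exp_zero]
    have hexp1 : Complex.exp (↑θ * Complex.I) ^ n
        = Complex.cos (↑(n*θ:ℝ)) + Complex.sin (↑(n*θ:ℝ)) * Complex.I := by
      rw [← Complex.exp_nat_mul, show (n:ℂ) * (↑θ * Complex.I) = (↑(n*θ:ℝ)) * Complex.I by
        push_cast; ring, Complex.exp_mul_I]
    have hexp2 : Complex.exp (-↑θ * Complex.I) ^ n
        = Complex.cos (↑(n*θ:ℝ)) - Complex.sin (↑(n*θ:ℝ)) * Complex.I := by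
      rw [← Complex.exp_nat_mul, show (n:ℂ) * (-↑θ * Complex.I) = (-↑(n*θ:ℝ)) * Complex.I by
        push_cast; ring, Complex.exp_mul_I, Complex.cos_neg, Complex.sin_neg]
      ring
    rw [hexp1, hexp2]
    have hIne : (2 * Complex.I : ℂ) ≠ 0 := by simp [Complex.I_ne_zero]
    push_cast [Complex.ofReal_cos, Complex.ofReal_sin]
    have hsum : ∀ r ∈ Finset.Icc 1 (n/2),
        (c r : ℂ) * z ^ (n - 2*r) * (Complex.exp (↑θ * Complex.I) * Complex.exp (-↑θ * Complex.I)) ^ r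
        = (c r : ℂ) * z ^ (n - 2*r) := by
      intro r hr
      rw [hprod, one_pow, mul_one]
    rw [Finset.sum_congr rfl hsum, hm2]
    field_simp
    ring
  -- u and v are nonzero
  rw [hE u v] at h0
  have hu : u ≠ 0 := by
    rintro rfl
    rw [zero_pow hn0, mul_zero, zero_add] at h0
    rcases mul_eq_zero.mp h0 with h|h
    · exact hb h
    · exact huv (by simp [pow_eq_zero_iff hn0 |>.mp h])
  have hv : v ≠ 0 := by
    rintro rfl
    rw [zero_pow hn0, mul_zero, add_zero] at h0
    rcases mul_eq_zero.mp h0 with h|h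
    · exact ha h
    · exact huv (by simp [pow_eq_zero_iff hn0 |>.mp h])
  by_cases hm0 : m = 0
  · -- n = 1 : the derivative is identically 1
    have hIcc : Finset.Icc 1 (n/2) = ∅ := by
      rw [hm2, hm0]
      rfl
    have hone : MvPolynomial.aeval ![(0:ℂ), u, v] (MvPolynomial.pderiv (0 : Fin 3) f) = 1 := by
      rw [hf, hIcc]
      simp only [Finset.sum_empty, add_zero, map_add, map_sub, pderiv_mul, pderiv_pow, pderiv_C,
        pderiv_X_self, pderiv_X_of_ne (by decide : (1:Fin 3) ≠ (0:Fin 3)),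
        pderiv_X_of_ne (by decide : (2:Fin 3) ≠ (0:Fin 3)), mul_zero, zero_mul,
        add_zero, zero_add, mul_one, sub_self, sub_zero]
      simp only [map_add, map_mul, map_pow, aeval_X, aeval_C, map_natCast, map_zero,
        Matrix.cons_val_zero, mul_zero, add_zero, zero_add]
      rw [show n - 1 = 0 by omega, pow_zero, show n = 1 by omega]
      norm_num
    rw [hone] at h1
    exact one_ne_zero h1
  · -- n ≥ 3
    have hcm : c m = 0 := by
      have hD' := hD u v hm0
      rw [h1] at hD'
      rcases mul_eq_zero.mp hD'.symm with h|h
      · exact Complex.ofReal_eq_zero.mp h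
      · exact absurd h (pow_ne_zero _ (mul_ne_zero hu hv))
    have hc0ne : c0 ≠ 0 ∨ ctil ≠ 0 := by
      by_contra h
      push_neg at h
      exact hne (by simp [h.1, h.2])
    obtain ⟨θ, hg⟩ : ∃ θ : ℝ, c0 * Real.cos (n*θ) + ctil * Real.sin (n*θ) ≠ 0 := by
      rcases hc0ne with h|h
      · exact ⟨0, by simpa using h⟩
      · refine ⟨Real.pi/(2*n), ?_⟩
        rw [show (n:ℝ) * (Real.pi/(2*n)) = Real.pi/2 by
          have hnn : (n:ℝ) ≠ 0 := Nat.cast_ne_zero.mpr hn0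
          field_simp]
        simpa using h
    exact aux14 n m hm hm0 c _ hg hcm (fun z hz => hhyp θ z (by rw [hP θ z]; exact hz))
end
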